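/- arXiv:2311.06901 — 10 statements merged into one kernel-verified Lean document; each statement's English description precedes it below -/
import Mathlib

section
/- Let I be a nonempty set of non-negative integers and let S be a submonoid of ℕ^(I). Then S is an ideal extension of ℕ^(I) if and only if M(S) + H(S) ⊆ S. -/
open Pointwise

section Defs

variable {M : Type*} [AddCommMonoid M] [PartialOrder M]

/-- `S* = S \ {0}`. -/
def Sstar (S : AddSubmonoid M) : Set M := (S : Set M) \ {0}

/-- The set of gaps `H(S)`, the complement of `S`. -/
def Gaps (S : AddSubmonoid M) : Set M := (S : Set M)ᶜ

/-- The set of atoms `A(S) = S* \ (S* + S*)`. -/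
def Atoms (S : AddSubmonoid M) : Set M := Sstar S \ (Sstar S + Sstar S)

/-- `S` is an ideal extension: `S* + M ⊆ S*`. -/
def IsIdealExtension (S : AddSubmonoid M) : Prop :=
  ∀ s ∈ Sstar S, ∀ x : M, s + x ∈ Sstar S

/-- `S` is gap absorbing. -/
def IsGapAbsorbing (S : AddSubmonoid M) : Prop :=
  Gaps S + Gaps S ⊆ Gaps S ∪ Atoms S ∪ (Atoms S + Atoms S) ∧
  Gaps S + Atoms S ⊆ Atoms S ∪ (Atoms S + Atoms S)

/-- `M(S)`: minimal elements of `S*` with respect to `≤`. -/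
def Mins (S : AddSubmonoid M) : Set M :=
  {m | m ∈ Sstar S ∧ ∀ t ∈ Sstar S, t ≤ m → t = m}

/-- `n`-fold sumset, with `0`-fold sumset `{0}`. -/
def nfold : ℕ → Set M → Set M
  | 0, _ => {0}
  | n + 1, X => nfold n X + X

/-- The set of lengths `L(s) = {n : s ∈ nA(S)}`. -/
def Lset (S : AddSubmonoid M) (s : M) : Set ℕ := {n | s ∈ nfold n (Atoms S)}

/-- The minimal factorization length `ℓ(s)`. -/
noncomputable def minLen (S : AddSubmonoid M) (s : M) : ℕ := sInf (Lset S s)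

/-- `X` is closed under intervals. -/
def ClosedUnderIntervals (X : Set M) : Prop :=
  ∀ u ∈ X, ∀ v ∈ X, u ≤ v → Set.Icc u v ⊆ X

/-- `a ≤_S b`, i.e. `b - a ∈ S`. -/
def dvdS (S : AddSubmonoid M) (a b : M) : Prop := ∃ t ∈ S, a + t = b

end Defs

theorem statement0 (I : Set ℕ) (hI : I.Nonempty) (S : AddSubmonoid (↥I →₀ ℕ)) :
    IsIdealExtension S ↔ Mins S + Gaps S ⊆ (S : Set (↥I →₀ ℕ)) := by
  constructor
  · rintro hIE x hx
    obtain ⟨m, hm, h, hh, rfl⟩ := hx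
    obtain ⟨hm1, -⟩ := hm
    exact (hIE m hm1 h).1
  · intro hMH s hs x
    obtain ⟨m, hmem, hmin⟩ := wellFounded_lt.has_min {t | t ∈ Sstar S ∧ t ≤ s} ⟨s, hs, le_rfl⟩
    obtain ⟨hmS, hms⟩ := hmem
    have hmM : m ∈ Mins S := by
      refine ⟨hmS, fun t ht htm => le_antisymm htm ?_⟩
      by_contra hlt
      exact hmin t ⟨ht, htm.trans hms⟩ (lt_of_le_not_ge htm hlt)
    obtain ⟨d, rfl⟩ := exists_add_of_le hms
    have key : m + d + x ∈ S := by
      by_cases hdx : d + x ∈ S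
      · have := S.add_mem hmS.1 hdx; rwa [← add_assoc] at this
      · have : m + (d + x) ∈ (S : Set (↥I →₀ ℕ)) :=
          hMH (Set.add_mem_add hmM hdx)
        rwa [← add_assoc] at this
    refine ⟨key, ?_⟩
    simp only [Set.mem_singleton_iff]
    intro h0
    have hm0 : m = 0 := by
      have := h0
      rw [add_assoc, add_eq_zero] at this
      exact this.1
    exact hmS.2 hm0
end

section
/- Let I be a nonempty set of non-negative integers and let S ⊆ ℕ^(I) be a gap absorbing monoid. Then S is an ideal extension of ℕ^(I). -/
open Pointwise

theorem statement1 (I : Set ℕ) (hI : I.Nonempty) (S : AddSubmonoid (↥I →₀ ℕ))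
    (hS : IsGapAbsorbing S) : IsIdealExtension S := by
  obtain ⟨-, hHA⟩ := hS
  -- Atoms and sums of atoms lie in S
  have hAS : Atoms S ⊆ (S : Set (↥I →₀ ℕ)) := fun a ha => ha.1.1
  have hAAS : Atoms S + Atoms S ⊆ (S : Set (↥I →₀ ℕ)) := by
    rintro y ⟨a, ha, b, hb, rfl⟩
    exact S.add_mem ha.1.1 hb.1.1
  -- degree
  set deg : (↥I →₀ ℕ) → ℕ := fun f => f.sum fun _ k => k with hdeg
  have hdeg0 : ∀ f : ↥I →₀ ℕ, deg f = 0 → f = 0 := by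
    intro f hf
    ext a
    rw [Finsupp.coe_zero, Pi.zero_apply]
    by_contra h
    have ha : a ∈ f.support := Finsupp.mem_support_iff.mpr h
    have : f a ≤ deg f := Finset.single_le_sum (fun i _ => Nat.zero_le _) ha
    omega
  have hdegadd : ∀ f g : ↥I →₀ ℕ, deg (f + g) = deg f + deg g := by
    intro f g
    exact Finsupp.sum_add_index' (fun _ => rfl) (fun _ _ _ => rfl)
  -- main induction
  have key : ∀ n : ℕ, ∀ s : ↥I →₀ ℕ, deg s ≤ n → s ∈ Sstar S →
      ∀ x : ↥I →₀ ℕ, s + x ∈ (S : Set (↥I →₀ ℕ)) := by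
    intro n
    induction n with
    | zero =>
      intro s hsd hs x
      exact absurd (hdeg0 s (Nat.le_zero.mp hsd)) hs.2
    | succ n ih =>
      intro s hsd hs x
      by_cases hA : s ∈ Atoms S
      · by_cases hx : x ∈ (S : Set (↥I →₀ ℕ))
        · exact S.add_mem hs.1 hx
        · have hxs : x + s ∈ Atoms S ∪ (Atoms S + Atoms S) :=
            hHA ⟨x, hx, s, hA, rfl⟩
          rw [add_comm]
          rcases hxs with h | h
          · exact hAS h
          · exact hAAS h
      · have hsum : s ∈ Sstar S + Sstar S := by
          by_contra h
          exact hA ⟨hs, h⟩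
        obtain ⟨u, hu, v, hv, rfl⟩ := hsum
        have hu1 : 1 ≤ deg u := by
          rcases Nat.eq_zero_or_pos (deg u) with h | h
          · exact absurd (hdeg0 u h) hu.2
          · exact h
        have hvd : deg v ≤ n := by
          have h1 := hdegadd u v
          have h2 : deg (u + v) ≤ n + 1 := hsd
          omega
        have hvx : v + x ∈ (S : Set (↥I →₀ ℕ)) := ih v hvd hv x
        have : u + (v + x) ∈ (S : Set (↥I →₀ ℕ)) := S.add_mem hu.1 hvx
        rwa [← add_assoc] at this
  intro s hs x
  refine ⟨key (deg s) s le_rfl hs x, ?_⟩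
  intro h
  have h0 : s + x = 0 := h
  have : s = 0 := by
    have := (add_eq_zero_iff_of_nonneg (zero_le : (0 : ↥I →₀ ℕ) ≤ s) (zero_le : (0 : ↥I →₀ ℕ) ≤ x)).mp h0
    exact this.1
  exact hs.2 this
end

section
/- Let I be a nonempty set of non-negative integers, let ∅ ≠ J ⊆ I, and for each j ∈ J let k_j be a positive integer. Then the submonoid S = {0} ∪ ({k_j·e_j : j ∈ J} + ℕ^(I)) of ℕ^(I) is gap absorbing. -/
open Pointwise

theorem statement2 (I : Set ℕ) (hI : I.Nonempty) (J : Set ℕ) (hJ : J.Nonempty)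
    (hJI : J ⊆ I) (k : ℕ → ℕ) (hk : ∀ j ∈ J, 0 < k j)
    (S : AddSubmonoid (↥I →₀ ℕ))
    (hS : (S : Set (↥I →₀ ℕ)) =
      {0} ∪ ({x : ↥I →₀ ℕ | ∃ j, ∃ hj : j ∈ J,
                x = Finsupp.single (⟨j, hJI hj⟩ : ↥I) (k j)} + Set.univ)) :
    IsGapAbsorbing S := by
  -- membership characterization
  have hmem : ∀ x : ↥I →₀ ℕ, x ∈ S ↔ x = 0 ∨ ∃ j, ∃ hj : j ∈ J, k j ≤ x ⟨j, hJI hj⟩ := by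
    intro x
    rw [← SetLike.mem_coe, hS]
    simp only [Set.mem_union, Set.mem_singleton_iff, Set.mem_add, Set.mem_setOf_eq,
      Set.mem_univ, true_and]
    constructor
    · rintro (h | ⟨t, ⟨j, hj, rfl⟩, u, -, rfl⟩)
      · exact Or.inl h
      · refine Or.inr ⟨j, hj, ?_⟩
        simp [Finsupp.add_apply, Finsupp.single_apply]
    · rintro (rfl | ⟨j, hj, hle⟩)
      · exact Or.inl rfl
      · exact Or.inr ⟨_, ⟨j, hj, rfl⟩, x - Finsupp.single _ (k j),
          add_tsub_cancel_of_le (Finsupp.single_le_iff.mpr hle)⟩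
  have hSstar : ∀ x : ↥I →₀ ℕ, x ∈ Sstar S ↔ ∃ j, ∃ hj : j ∈ J, k j ≤ x ⟨j, hJI hj⟩ := by
    intro x
    constructor
    · rintro ⟨hx, hx0⟩
      rcases (hmem x).mp hx with rfl | h
      · exact absurd rfl hx0
      · exact h
    · rintro ⟨j, hj, hle⟩
      refine ⟨(hmem x).mpr (Or.inr ⟨j, hj, hle⟩), ?_⟩
      intro h0
      rw [Set.mem_singleton_iff] at h0
      subst h0
      simp only [Finsupp.coe_zero, Pi.zero_apply] at hle
      exact absurd hle (by have := hk j hj; omega)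
  have hGaps : ∀ x : ↥I →₀ ℕ, x ∈ Gaps S ↔
      x ≠ 0 ∧ ∀ j, ∀ hj : j ∈ J, x ⟨j, hJI hj⟩ < k j := by
    intro x
    simp only [Gaps, Set.mem_compl_iff, SetLike.mem_coe, hmem, not_or, not_exists, not_le]
  have hAtom_intro : ∀ (x : ↥I →₀ ℕ) (j : ℕ) (hj : j ∈ J),
      k j ≤ x ⟨j, hJI hj⟩ → x ⟨j, hJI hj⟩ < 2 * k j →
      (∀ j', ∀ hj' : j' ∈ J, j' ≠ j → x ⟨j', hJI hj'⟩ < k j') → x ∈ Atoms S := by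
    intro x j hj h1 h2 h3
    refine ⟨(hSstar x).mpr ⟨j, hj, h1⟩, ?_⟩
    rintro ⟨u, hu, v, hv, rfl⟩
    obtain ⟨j1, hj1, hu1⟩ := (hSstar u).mp hu
    obtain ⟨j2, hj2, hv2⟩ := (hSstar v).mp hv
    have hb1 : k j1 ≤ (u + v) ⟨j1, hJI hj1⟩ := by
      rw [Finsupp.add_apply]; omega
    have hb2 : k j2 ≤ (u + v) ⟨j2, hJI hj2⟩ := by
      rw [Finsupp.add_apply]; omega
    have e1 : j1 = j := by
      by_contra hne
      exact absurd hb1 (not_le.mpr (h3 j1 hj1 hne))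
    have e2 : j2 = j := by
      by_contra hne
      exact absurd hb2 (not_le.mpr (h3 j2 hj2 hne))
    subst e1; subst e2
    rw [Finsupp.add_apply] at h2
    omega
  have hAtom_elim : ∀ x ∈ Atoms S, ∃ j, ∃ hj : j ∈ J,
      k j ≤ x ⟨j, hJI hj⟩ ∧ x ⟨j, hJI hj⟩ < 2 * k j ∧
      ∀ j', ∀ hj' : j' ∈ J, j' ≠ j → x ⟨j', hJI hj'⟩ < k j' := by
    rintro x ⟨hx, hxns⟩
    obtain ⟨j, hj, hle⟩ := (hSstar x).mp hx
    refine ⟨j, hj, hle, ?_, ?_⟩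
    · by_contra hge
      push_neg at hge
      apply hxns
      set u : ↥I →₀ ℕ := Finsupp.single ⟨j, hJI hj⟩ (k j) with hu_def
      have hu : u ∈ Sstar S := (hSstar u).mpr ⟨j, hj, by simp [hu_def]⟩
      have hv : x - u ∈ Sstar S := by
        refine (hSstar _).mpr ⟨j, hj, ?_⟩
        rw [Finsupp.tsub_apply, hu_def, Finsupp.single_eq_same]
        omega
      exact Set.mem_add.mpr ⟨u, hu, x - u, hv,
        add_tsub_cancel_of_le (Finsupp.single_le_iff.mpr hle)⟩
    · intro j' hj' hne
      by_contra hge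
      push_neg at hge
      apply hxns
      set u : ↥I →₀ ℕ := Finsupp.single ⟨j, hJI hj⟩ (k j) with hu_def
      have hu : u ∈ Sstar S := (hSstar u).mpr ⟨j, hj, by simp [hu_def]⟩
      have hv : x - u ∈ Sstar S := by
        refine (hSstar _).mpr ⟨j', hj', ?_⟩
        rw [Finsupp.tsub_apply, hu_def,
          Finsupp.single_eq_of_ne' (fun h => hne (congrArg Subtype.val h).symm)]
        omega
      exact Set.mem_add.mpr ⟨u, hu, x - u, hv,
        add_tsub_cancel_of_le (Finsupp.single_le_iff.mpr hle)⟩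
  have key : ∀ (h1 h2 : ↥I →₀ ℕ) (j j2 : ℕ) (hj : j ∈ J) (hj2 : j2 ∈ J), j2 ≠ j →
      k j ≤ (h1 + h2) ⟨j, hJI hj⟩ → (h1 + h2) ⟨j, hJI hj⟩ < 2 * k j →
      k j2 ≤ (h1 + h2) ⟨j2, hJI hj2⟩ → (h1 + h2) ⟨j2, hJI hj2⟩ < 2 * k j2 →
      (∀ j', ∀ hj' : j' ∈ J, j' ≠ j → h1 ⟨j', hJI hj'⟩ < k j') →
      (∀ j', ∀ hj' : j' ∈ J, j' ≠ j2 → h2 ⟨j', hJI hj'⟩ < k j') →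
      h1 + h2 ∈ Atoms S + Atoms S := by
    intro h1 h2 j j2 hj hj2 hne hb1 hb1' hb2 hb2' hlt1 hlt2
    rw [Finsupp.add_apply] at hb1 hb1' hb2 hb2'
    set σ1 : ↥I →₀ ℕ := Finsupp.single ⟨j, hJI hj⟩ (h2 ⟨j, hJI hj⟩) with hσ1
    set σ2 : ↥I →₀ ℕ := Finsupp.single ⟨j2, hJI hj2⟩ (h1 ⟨j2, hJI hj2⟩) with hσ2
    set u : ↥I →₀ ℕ := (h1 - σ2) + σ1 with hu_def
    set v : ↥I →₀ ℕ := (h2 - σ1) + σ2 with hv_def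
    have hle1 : σ1 ≤ h2 := Finsupp.single_le_iff.mpr le_rfl
    have hle2 : σ2 ≤ h1 := Finsupp.single_le_iff.mpr le_rfl
    have hval : ∀ i : ↥I, u i = (h1 i - σ2 i) + σ1 i := by
      intro i; rw [hu_def, Finsupp.add_apply, Finsupp.tsub_apply]
    have hval' : ∀ i : ↥I, v i = (h2 i - σ1 i) + σ2 i := by
      intro i; rw [hv_def, Finsupp.add_apply, Finsupp.tsub_apply]
    have hsum : u + v = h1 + h2 := by
      ext i
      have l1 : σ1 i ≤ h2 i := Finsupp.le_def.mp hle1 i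
      have l2 : σ2 i ≤ h1 i := Finsupp.le_def.mp hle2 i
      simp only [hu_def, hv_def, Finsupp.add_apply, Finsupp.tsub_apply]
      omega
    have hnesub : (⟨j2, hJI hj2⟩ : ↥I) ≠ ⟨j, hJI hj⟩ :=
      fun h => hne (congrArg Subtype.val h)
    have hu : u ∈ Atoms S := by
      refine hAtom_intro u j hj ?_ ?_ ?_
      · rw [hval, hσ1, hσ2, Finsupp.single_eq_same, Finsupp.single_eq_of_ne' hnesub]
        omega
      · rw [hval, hσ1, hσ2, Finsupp.single_eq_same, Finsupp.single_eq_of_ne' hnesub]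
        omega
      · intro j' hj' hne'
        have hne'sub : (⟨j, hJI hj⟩ : ↥I) ≠ ⟨j', hJI hj'⟩ :=
          fun h => hne' (congrArg Subtype.val h).symm
        by_cases hc : j' = j2
        · subst hc
          rw [hval, hσ1, hσ2, Finsupp.single_eq_same, Finsupp.single_eq_of_ne' hne'sub]
          have := hk j' hj'
          omega
        · have hcsub : (⟨j2, hJI hj2⟩ : ↥I) ≠ ⟨j', hJI hj'⟩ :=
            fun h => hc (congrArg Subtype.val h).symm
          rw [hval, hσ1, hσ2, Finsupp.single_eq_of_ne' hcsub,
            Finsupp.single_eq_of_ne' hne'sub]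
          have := hlt1 j' hj' hne'
          omega
    have hv : v ∈ Atoms S := by
      refine hAtom_intro v j2 hj2 ?_ ?_ ?_
      · rw [hval', hσ1, hσ2, Finsupp.single_eq_same, Finsupp.single_eq_of_ne' hnesub.symm]
        omega
      · rw [hval', hσ1, hσ2, Finsupp.single_eq_same, Finsupp.single_eq_of_ne' hnesub.symm]
        omega
      · intro j' hj' hne'
        have hne'sub : (⟨j2, hJI hj2⟩ : ↥I) ≠ ⟨j', hJI hj'⟩ :=
          fun h => hne' (congrArg Subtype.val h).symm
        by_cases hc : j' = j
        · subst hc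
          rw [hval', hσ1, hσ2, Finsupp.single_eq_same, Finsupp.single_eq_of_ne' hne'sub]
          have := hk j' hj'
          omega
        · have hcsub : (⟨j, hJI hj⟩ : ↥I) ≠ ⟨j', hJI hj'⟩ :=
            fun h => hc (congrArg Subtype.val h).symm
          rw [hval', hσ1, hσ2, Finsupp.single_eq_of_ne' hcsub,
            Finsupp.single_eq_of_ne' hne'sub]
          have := hlt2 j' hj' hne'
          omega
    exact Set.mem_add.mpr ⟨u, hu, v, hv, hsum⟩
  have key2 : ∀ (h a : ↥I →₀ ℕ) (j j2 : ℕ) (hj : j ∈ J) (hj2 : j2 ∈ J), j2 ≠ j →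
      k j ≤ a ⟨j, hJI hj⟩ → a ⟨j, hJI hj⟩ < 2 * k j →
      (∀ j', ∀ hj' : j' ∈ J, j' ≠ j → a ⟨j', hJI hj'⟩ < k j') →
      k j2 ≤ (h + a) ⟨j2, hJI hj2⟩ → (h + a) ⟨j2, hJI hj2⟩ < 2 * k j2 →
      (∀ j', ∀ hj' : j' ∈ J, h ⟨j', hJI hj'⟩ < k j') →
      h + a ∈ Atoms S + Atoms S := by
    intro h a j j2 hj hj2 hne ha1 ha2 ha3 hb2 hb2' hlth
    rw [Finsupp.add_apply] at hb2 hb2'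
    set σ : ↥I →₀ ℕ := Finsupp.single ⟨j2, hJI hj2⟩ (a ⟨j2, hJI hj2⟩) with hσ
    have hle : σ ≤ a := Finsupp.single_le_iff.mpr le_rfl
    set u : ↥I →₀ ℕ := a - σ with hu_def
    set v : ↥I →₀ ℕ := h + σ with hv_def
    have hnesub : (⟨j2, hJI hj2⟩ : ↥I) ≠ ⟨j, hJI hj⟩ :=
      fun hx => hne (congrArg Subtype.val hx)
    have hsum : u + v = h + a := by
      ext i
      have l : σ i ≤ a i := Finsupp.le_def.mp hle i
      simp only [hu_def, hv_def, Finsupp.add_apply, Finsupp.tsub_apply]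
      omega
    have hu : u ∈ Atoms S := by
      refine hAtom_intro u j hj ?_ ?_ ?_
      · rw [hu_def, Finsupp.tsub_apply, hσ, Finsupp.single_eq_of_ne' hnesub]
        omega
      · rw [hu_def, Finsupp.tsub_apply, hσ, Finsupp.single_eq_of_ne' hnesub]
        omega
      · intro j' hj' hne'
        by_cases hc : j' = j2
        · subst hc
          rw [hu_def, Finsupp.tsub_apply, hσ, Finsupp.single_eq_same]
          have := hk j' hj'
          omega
        · have hcsub : (⟨j2, hJI hj2⟩ : ↥I) ≠ ⟨j', hJI hj'⟩ :=
            fun hx => hc (congrArg Subtype.val hx).symm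
          rw [hu_def, Finsupp.tsub_apply, hσ, Finsupp.single_eq_of_ne' hcsub]
          have := ha3 j' hj' hne'
          omega
    have hv : v ∈ Atoms S := by
      refine hAtom_intro v j2 hj2 ?_ ?_ ?_
      · rw [hv_def, Finsupp.add_apply, hσ, Finsupp.single_eq_same]
        omega
      · rw [hv_def, Finsupp.add_apply, hσ, Finsupp.single_eq_same]
        omega
      · intro j' hj' hne'
        have hcsub : (⟨j2, hJI hj2⟩ : ↥I) ≠ ⟨j', hJI hj'⟩ :=
          fun hx => hne' (congrArg Subtype.val hx).symm
        rw [hv_def, Finsupp.add_apply, hσ, Finsupp.single_eq_of_ne' hcsub]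
        have := hlth j' hj'
        omega
    rw [show h + a = u + v from hsum.symm]
    exact Set.mem_add.mpr ⟨u, hu, v, hv, rfl⟩
  constructor
  · -- Gaps + Gaps
    intro s hs
    obtain ⟨h1, hh1, h2, hh2, rfl⟩ := Set.mem_add.mp hs
    obtain ⟨h10, hlt1⟩ := (hGaps h1).mp hh1
    obtain ⟨h20, hlt2⟩ := (hGaps h2).mp hh2
    by_cases hbig : ∃ j, ∃ hj : j ∈ J, k j ≤ (h1 + h2) ⟨j, hJI hj⟩
    · obtain ⟨j, hj, hbj⟩ := hbig
      by_cases hbig2 : ∃ j2, ∃ hj2 : j2 ∈ J, j2 ≠ j ∧ k j2 ≤ (h1 + h2) ⟨j2, hJI hj2⟩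
      · obtain ⟨j2, hj2, hne2, hbj2⟩ := hbig2
        refine Or.inr (key h1 h2 j j2 hj hj2 hne2 hbj ?_ hbj2 ?_ ?_ ?_)
        · rw [Finsupp.add_apply]
          have := hlt1 j hj; have := hlt2 j hj; omega
        · rw [Finsupp.add_apply]
          have := hlt1 j2 hj2; have := hlt2 j2 hj2; omega
        · intro j' hj' _
          exact hlt1 j' hj'
        · intro j' hj' _
          exact hlt2 j' hj'
      · push_neg at hbig2
        refine Or.inl (Or.inr (hAtom_intro _ j hj hbj ?_ ?_))
        · rw [Finsupp.add_apply]
          have := hlt1 j hj; have := hlt2 j hj; omega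
        · intro j' hj' hne'
          exact hbig2 j' hj' hne'
    · push_neg at hbig
      refine Or.inl (Or.inl ((hGaps _).mpr ⟨?_, hbig⟩))
      intro h0
      apply h10
      ext i
      have := Finsupp.ext_iff.mp h0 i
      rw [Finsupp.add_apply] at this
      simp only [Finsupp.coe_zero, Pi.zero_apply] at this ⊢
      omega
  · -- Gaps + Atoms
    intro s hs
    obtain ⟨h, hh, a, ha, rfl⟩ := Set.mem_add.mp hs
    obtain ⟨h0, hlth⟩ := (hGaps h).mp hh
    obtain ⟨j, hj, ha1, ha2, ha3⟩ := hAtom_elim a ha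
    by_cases hbig2 : ∃ j2, ∃ hj2 : j2 ∈ J, j2 ≠ j ∧ k j2 ≤ (h + a) ⟨j2, hJI hj2⟩
    · obtain ⟨j2, hj2, hne2, hbj2⟩ := hbig2
      refine Or.inr (key2 h a j j2 hj hj2 hne2 ha1 ha2 ha3 hbj2 ?_ hlth)
      · rw [Finsupp.add_apply]
        have := hlth j2 hj2
        have := ha3 j2 hj2 hne2
        omega
    · push_neg at hbig2
      by_cases hcase : (h + a) ⟨j, hJI hj⟩ < 2 * k j
      · refine Or.inl (hAtom_intro _ j hj ?_ hcase ?_)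
        · rw [Finsupp.add_apply]
          omega
        · intro j' hj' hne'
          exact hbig2 j' hj' hne'
      · push_neg at hcase
        set u : ↥I →₀ ℕ := Finsupp.single ⟨j, hJI hj⟩ (k j) with hu_def
        have hleu : u ≤ h + a := by
          rw [hu_def]
          refine Finsupp.single_le_iff.mpr ?_
          rw [Finsupp.add_apply]
          omega
        have hu : u ∈ Atoms S := by
          refine hAtom_intro u j hj ?_ ?_ ?_
          · rw [hu_def, Finsupp.single_eq_same]
          · rw [hu_def, Finsupp.single_eq_same]
            have := hk j hj
            omega
          · intro j' hj' hne'
            have hcsub : (⟨j, hJI hj⟩ : ↥I) ≠ ⟨j', hJI hj'⟩ :=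
              fun hx => hne' (congrArg Subtype.val hx).symm
            rw [hu_def, Finsupp.single_eq_of_ne' hcsub]
            exact hk j' hj'
        have hv : h + a - u ∈ Atoms S := by
          refine hAtom_intro _ j hj ?_ ?_ ?_
          · rw [Finsupp.tsub_apply, hu_def, Finsupp.single_eq_same, Finsupp.add_apply]
            rw [Finsupp.add_apply] at hcase
            omega
          · rw [Finsupp.tsub_apply, hu_def, Finsupp.single_eq_same, Finsupp.add_apply]
            have := hlth j hj
            omega
          · intro j' hj' hne'
            have hcsub : (⟨j, hJI hj⟩ : ↥I) ≠ ⟨j', hJI hj'⟩ :=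
              fun hx => hne' (congrArg Subtype.val hx).symm
            rw [Finsupp.tsub_apply, hu_def, Finsupp.single_eq_of_ne' hcsub]
            have := hbig2 j' hj' hne'
            omega
        exact Or.inr (Set.mem_add.mpr ⟨u, hu, h + a - u, hv,
          add_tsub_cancel_of_le hleu⟩)
end

section
/- Let I be a nonempty set of non-negative integers and let S be an ideal extension of ℕ^(I). Then for every atom a ∈ A(S) and every i ∈ I, a + e_i ∈ A(S) ∪ (A(S) + A(S)). If moreover e_i ∉ M(S), then m + e_i ∈ A(S) for every m ∈ M(S). -/
open Pointwise

section Aux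

variable {I : Set ℕ} {S : AddSubmonoid (↥I →₀ ℕ)}

/-- If the last of three `S*` summands has `i`-coordinate ≥ 1, an atom plus `e_i`
cannot equal the sum. -/
lemma aux_main (hS : IsIdealExtension S) (i : ↥I) {a p q r : ↥I →₀ ℕ}
    (ha : a ∈ Atoms S) (hp : p ∈ Sstar S) (hq : q ∈ Sstar S)
    (hri : 1 ≤ r i) (heq : a + Finsupp.single i 1 = p + q + r) : False := by
  have hle : Finsupp.single i 1 ≤ r := Finsupp.single_le_iff.mpr hri
  obtain ⟨r', hr'⟩ := exists_add_of_le hle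
  have h2 : a + Finsupp.single i 1
      = (p + (q + r')) + Finsupp.single i 1 := by
    rw [heq, hr']; abel
  have ha' : a = p + (q + r') := add_right_cancel h2
  exact ha.2 (ha' ▸ Set.add_mem_add hp (hS q hq _))

/-- An atom plus `e_i` is never a sum of three elements of `S*`. -/
lemma aux_key (hS : IsIdealExtension S) (i : ↥I) {a s1 s2 s3 : ↥I →₀ ℕ}
    (ha : a ∈ Atoms S) (h1 : s1 ∈ Sstar S) (h2 : s2 ∈ Sstar S) (h3 : s3 ∈ Sstar S)
    (heq : a + Finsupp.single i 1 = s1 + s2 + s3) : False := by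
  have hcoord : s1 i + s2 i + s3 i = a i + 1 := by
    have := congrArg (fun f : ↥I →₀ ℕ => f i) heq
    simpa [Finsupp.add_apply, Finsupp.single_apply] using this.symm
  rcases Nat.lt_or_ge (s3 i) 1 with h3i | h3i
  · rcases Nat.lt_or_ge (s2 i) 1 with h2i | h2i
    · have h1i : 1 ≤ s1 i := by omega
      exact aux_main hS i ha h2 h3 h1i (by rw [heq]; abel)
    · exact aux_main hS i ha h1 h3 h2i (by rw [heq]; abel)
  · exact aux_main hS i ha h1 h2 h3i heq

/-- Anything nonzero below `e_i` equals `e_i`. -/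
lemma aux_le_single {t : ↥I →₀ ℕ} {i : ↥I} (ht : t ≠ 0) (hle : t ≤ Finsupp.single i 1) :
    t = Finsupp.single i 1 := by
  have hj : ∀ j, t j ≤ (Finsupp.single i 1) j := fun j => hle j
  have hz : ∀ j, j ≠ i → t j = 0 := by
    intro j hji
    have := hj j
    rw [Finsupp.single_apply, if_neg (fun h => hji h.symm)] at this
    omega
  by_cases hti : t i = 0
  · exfalso
    apply ht
    ext j
    by_cases hji : j = i
    · subst hji; exact hti
    · exact hz j hji
  · have hti1 : t i = 1 := by
      have := hj i
      rw [Finsupp.single_apply, if_pos rfl] at this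
      omega
    ext j
    rw [Finsupp.single_apply]
    by_cases hji : i = j
    · subst hji; rw [if_pos rfl]; exact hti1
    · rw [if_neg hji]; exact hz j (fun h => hji h.symm)

end Aux

theorem statement4 (I : Set ℕ) (hI : I.Nonempty) (S : AddSubmonoid (↥I →₀ ℕ))
    (hS : IsIdealExtension S) (i : ↥I) :
    (∀ a ∈ Atoms S, a + Finsupp.single i 1 ∈ Atoms S ∪ (Atoms S + Atoms S)) ∧
    (Finsupp.single i 1 ∉ Mins S →
      ∀ m ∈ Mins S, m + Finsupp.single i 1 ∈ Atoms S) := by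
  constructor
  · intro a ha
    have hmem : a + Finsupp.single i 1 ∈ Sstar S := hS a ha.1 _
    by_cases hat : a + Finsupp.single i 1 ∈ Atoms S
    · exact Or.inl hat
    · right
      have hsum : a + Finsupp.single i 1 ∈ Sstar S + Sstar S := by
        by_contra hns
        exact hat ⟨hmem, hns⟩
      obtain ⟨u, hu, v, hv, huv⟩ := Set.mem_add.mp hsum
      have hua : u ∈ Atoms S := by
        refine ⟨hu, fun husum => ?_⟩
        obtain ⟨u1, hu1, u2, hu2, hu12⟩ := Set.mem_add.mp husum
        exact aux_key hS i ha hu1 hu2 hv (by rw [← huv, ← hu12])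
      have hva : v ∈ Atoms S := by
        refine ⟨hv, fun hvsum => ?_⟩
        obtain ⟨v1, hv1, v2, hv2, hv12⟩ := Set.mem_add.mp hvsum
        exact aux_key hS i ha hu hv1 hv2 (by rw [← huv, ← hv12, add_assoc])
      exact huv ▸ Set.add_mem_add hua hva
  · intro hne m hm
    refine ⟨hS m hm.1 _, fun hsum => ?_⟩
    obtain ⟨u, hu, v, hv, huv⟩ := Set.mem_add.mp hsum
    have hcoord : u i + v i = m i + 1 := by
      have := congrArg (fun f : ↥I →₀ ℕ => f i) huv
      simpa [Finsupp.add_apply, Finsupp.single_apply] using this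
    -- one of u, v has i-coordinate ≥ 1
    have main : ∀ u v : ↥I →₀ ℕ, u ∈ Sstar S → v ∈ Sstar S → 1 ≤ u i →
        u + v = m + Finsupp.single i 1 → False := by
      intro u v hu hv hui huv
      have hle : Finsupp.single i 1 ≤ u := Finsupp.single_le_iff.mpr hui
      obtain ⟨u', hu'⟩ := exists_add_of_le hle
      have h2 : (v + u') + Finsupp.single i 1
          = m + Finsupp.single i 1 := by rw [← huv, hu']; abel
      have hm' : v + u' = m := add_right_cancel h2
      have hvle : v ≤ m := hm' ▸ le_add_of_nonneg_right zero_le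
      have hvm : v = m := hm.2 v hv hvle
      have hue : u = Finsupp.single i 1 := by
        have h3 : m + u' = m := by rw [← hvm] at hm' ⊢; exact hm'
        have h0 : u' = 0 := by
          have := h3.trans (add_zero m).symm
          exact add_left_cancel this
        rw [hu', h0, add_zero]
      apply hne
      rw [← hue]
      exact ⟨hu, fun t ht htle => by
        rw [hue] at htle ⊢
        exact aux_le_single ht.2 htle⟩
    rcases Nat.lt_or_ge (u i) 1 with hui | hui
    · exact main v u hv hu (by omega) ((add_comm v u).trans huv)
    · exact main u v hu hv hui huv
end

section
/- Let I be a nonempty set of non-negative integers, let S ⊆ ℕ^(I) be a gap absorbing monoid, and let n be an integer greater than one. Then for all s ∈ nA(S) and all i ∈ I such that s − e_i ∈ ℕ^(I), one has s − e_i ∈ (n−1)A(S) ∪ nA(S). -/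
open Pointwise

section Aux

variable {I : Set ℕ} (S : AddSubmonoid (↥I →₀ ℕ))

private lemma apply_of_eq {I : Set ℕ} {x s : ↥I →₀ ℕ} (i j : ↥I) (h : x + Finsupp.single i 1 = s) :
    x j + (Finsupp.single i (1:ℕ)) j = s j := by
  rw [← h]; simp

private lemma myadd_eq_zero {u v : ↥I →₀ ℕ} (h : u + v = 0) : u = 0 ∧ v = 0 :=
  (add_eq_zero_iff_of_nonneg (by positivity) (by positivity)).mp h

private lemma nfold_mem_S : ∀ n, ∀ x ∈ nfold n (Atoms S), x ∈ S := by
  intro n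
  induction n with
  | zero => intro x hx; simp only [nfold, Set.mem_singleton_iff] at hx; exact hx ▸ S.zero_mem
  | succ n ih =>
      intro x hx
      obtain ⟨p, hp, a, ha, rfl⟩ := Set.mem_add.mp hx
      exact S.add_mem (ih p hp) ha.1.1

private lemma nfold_ne_zero : ∀ n, ∀ x ∈ nfold (n + 1) (Atoms S), x ≠ 0 := by
  intro n x hx hx0
  obtain ⟨p, hp, a, ha, h⟩ := Set.mem_add.mp hx
  rw [hx0] at h
  exact ha.1.2 (myadd_eq_zero h).2

private lemma nfold_mem_Sstar : ∀ n, ∀ x ∈ nfold (n + 1) (Atoms S), x ∈ Sstar S :=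
  fun n x hx => ⟨nfold_mem_S S _ x hx, nfold_ne_zero S n x hx⟩

private lemma nfold_add : ∀ m k (x y : ↥I →₀ ℕ), x ∈ nfold m (Atoms S) →
    y ∈ nfold k (Atoms S) → x + y ∈ nfold (m + k) (Atoms S) := by
  intro m k
  induction k with
  | zero =>
      intro x y hx hy
      simp only [nfold, Set.mem_singleton_iff] at hy
      simpa [hy] using hx
  | succ k ih =>
      intro x y hx hy
      obtain ⟨p, hp, a, ha, rfl⟩ := Set.mem_add.mp hy
      have : x + (p + a) = (x + p) + a := by abel
      rw [this]
      exact Set.add_mem_add (ih x p hx hp) ha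

private lemma nfold_one : nfold 1 (Atoms S) = Atoms S := by
  show nfold 0 (Atoms S) + Atoms S = Atoms S
  simp only [nfold]
  ext x
  constructor
  · rintro ⟨u, hu, v, hv, rfl⟩
    simp only [Set.mem_singleton_iff] at hu
    simpa [hu] using hv
  · intro hx
    exact ⟨0, rfl, x, hx, zero_add x⟩

private lemma nfold_two : nfold 2 (Atoms S) = Atoms S + Atoms S := by
  show nfold 1 (Atoms S) + Atoms S = _
  rw [nfold_one]

/-- degree of a finsupp -/
private def deg (f : ↥I →₀ ℕ) : ℕ := f.sum fun _ n => n

private lemma deg_add (u v : ↥I →₀ ℕ) : deg (u + v) = deg u + deg v :=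
  Finsupp.sum_add_index' (fun _ => rfl) (fun _ _ _ => rfl)

private lemma deg_pos {u : ↥I →₀ ℕ} (hu : u ≠ 0) : 1 ≤ deg u := by
  obtain ⟨a, ha⟩ := Finsupp.ne_iff.mp hu
  simp only [Finsupp.coe_zero, Pi.zero_apply] at ha
  have hmem : a ∈ u.support := Finsupp.mem_support_iff.mpr ha
  calc 1 ≤ u a := Nat.one_le_iff_ne_zero.mpr ha
  _ ≤ deg u := Finset.single_le_sum (fun _ _ => Nat.zero_le _) hmem

private lemma not_atom_split {b : ↥I →₀ ℕ} (hb : b ∈ Sstar S) (hba : b ∉ Atoms S) :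
    ∃ u ∈ Sstar S, ∃ v ∈ Sstar S, u + v = b := by
  have : b ∈ Sstar S + Sstar S := by
    by_contra h
    exact hba ⟨hb, h⟩
  exact Set.mem_add.mp this

private lemma atomic : ∀ d, ∀ b : ↥I →₀ ℕ, deg b ≤ d → b ∈ Sstar S →
    ∃ m, b ∈ nfold (m + 1) (Atoms S) := by
  intro d
  induction d with
  | zero =>
      intro b hd hb
      refine absurd hd (Nat.not_le.mpr (deg_pos ?_))
      exact hb.2
  | succ d ih =>
      intro b hd hb
      by_cases hba : b ∈ Atoms S
      · exact ⟨0, by rw [nfold_one]; exact hba⟩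
      · obtain ⟨u, hu, v, hv, rfl⟩ := not_atom_split S hb hba
        have hdu : deg u ≤ d := by
          have := deg_add u v
          have := deg_pos hv.2
          omega
        have hdv : deg v ≤ d := by
          have := deg_add u v
          have := deg_pos hu.2
          omega
        obtain ⟨m1, hm1⟩ := ih u hdu hu
        obtain ⟨m2, hm2⟩ := ih v hdv hv
        exact ⟨m1 + m2 + 1, by
          have := nfold_add S (m1 + 1) (m2 + 1) u v hm1 hm2
          convert this using 2
          omega⟩

variable (hS : IsGapAbsorbing S)
include hS

/-- adding e_i (a gap) to an element of S* stays in S*. -/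
private lemma gap_add_Sstar {g : ↥I →₀ ℕ} (hg : g ∉ (S : Set (↥I →₀ ℕ)))
    {u : ↥I →₀ ℕ} (hu : u ∈ Sstar S) : g + u ∈ Sstar S := by
  obtain ⟨m, hm⟩ := atomic S (deg u) u le_rfl hu
  clear hu
  induction m generalizing u with
  | zero =>
      rw [nfold_one] at hm
      have := hS.2 (Set.add_mem_add (a := g) (b := u) hg hm)
      rcases this with h | h
      · exact ⟨h.1.1, h.1.2⟩
      · obtain ⟨x, hx, y, hy, hxy⟩ := Set.mem_add.mp h
        refine ⟨by rw [← hxy]; exact S.add_mem hx.1.1 hy.1.1, ?_⟩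
        intro h0
        rw [← hxy] at h0
        exact hx.1.2 (myadd_eq_zero h0).1
  | succ m ihm =>
      obtain ⟨p, hp, a, ha, rfl⟩ := Set.mem_add.mp hm
      have h1 : g + p ∈ Sstar S := ihm hp
      refine ⟨?_, ?_⟩
      · have : g + (p + a) = (g + p) + a := by abel
        rw [this]
        exact S.add_mem h1.1 ha.1.1
      · intro h0
        have : (g + p) + a = 0 := by rw [← h0]; abel
        exact h1.2 (myadd_eq_zero this).1

/-- if b ∈ S* and b + e_i is an atom, then b is an atom. -/
private lemma pred_atom {b : ↥I →₀ ℕ} (i : ↥I) (hb : b ∈ Sstar S)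
    (ha : b + Finsupp.single i 1 ∈ Atoms S) : b ∈ Atoms S := by
  have hei : Finsupp.single i (1 : ℕ) ∉ (S : Set (↥I →₀ ℕ)) := by
    intro h
    exact ha.2 (Set.add_mem_add hb ⟨h, by simp⟩)
  by_contra hba
  obtain ⟨u, hu, v, hv, rfl⟩ := not_atom_split S hb hba
  have h1 : Finsupp.single i 1 + u ∈ Sstar S := gap_add_Sstar S hS hei hu
  refine ha.2 (Set.mem_add.mpr ⟨_, h1, v, hv, by abel⟩)

/-- key local lemma: b + e_i atom, a' atom implies b + a' ∈ A ∪ (A+A). -/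
private lemma keyA {b : ↥I →₀ ℕ} (i : ↥I) (ha : b + Finsupp.single i 1 ∈ Atoms S)
    {a' : ↥I →₀ ℕ} (ha' : a' ∈ Atoms S) :
    b + a' ∈ Atoms S ∪ (Atoms S + Atoms S) := by
  by_cases hbS : b ∈ (S : Set (↥I →₀ ℕ))
  · by_cases hb0 : b = 0
    · left; simpa [hb0] using ha'
    · right
      exact Set.add_mem_add (pred_atom S hS i ⟨hbS, hb0⟩ ha) ha'
  · exact hS.2 (Set.add_mem_add hbS ha')

private lemma key : ∀ m, ∀ s ∈ nfold (m + 2) (Atoms S), ∀ (i : ↥I) (x : ↥I →₀ ℕ),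
    x + Finsupp.single i 1 = s →
    x ∈ nfold (m + 1) (Atoms S) ∪ nfold (m + 2) (Atoms S) := by
  intro m
  induction m with
  | zero =>
      intro s hs i x hx
      obtain ⟨p, hp, a, ha, rfl⟩ := Set.mem_add.mp hs
      rw [nfold_one] at hp
      have hi := apply_of_eq i i hx
      simp only [Finsupp.single_eq_same, Finsupp.add_apply] at hi
      rcases Nat.lt_or_ge (a i) 1 with hai | hai
      · -- p i ≥ 1
        have hpi : 1 ≤ p i := by omega
        obtain ⟨c, hc⟩ := exists_add_of_le ((Finsupp.single_le_iff).mpr hpi)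
        have hc' : c + Finsupp.single i 1 = p := by rw [hc]; abel
        have hxca : x = c + a := by
          apply add_right_cancel (b := Finsupp.single i 1)
          rw [hx, ← hc']; abel
        rw [hxca]
        have := keyA S hS i (by rw [hc']; exact hp) ha
        rcases this with h | h
        · left; rw [nfold_one]; exact h
        · right; rw [nfold_two]; exact h
      · obtain ⟨c, hc⟩ := exists_add_of_le ((Finsupp.single_le_iff).mpr hai)
        have hc' : c + Finsupp.single i 1 = a := by rw [hc]; abel
        have hxca : x = c + p := by
          apply add_right_cancel (b := Finsupp.single i 1)
          rw [hx, ← hc']; abel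
        rw [hxca]
        have := keyA S hS i (by rw [hc']; exact ha) hp
        rcases this with h | h
        · left; rw [nfold_one]; exact h
        · right; rw [nfold_two]; exact h
  | succ m ihm =>
      intro s hs i x hx
      obtain ⟨p, hp, a, ha, rfl⟩ := Set.mem_add.mp hs
      have hi := apply_of_eq i i hx
      simp only [Finsupp.single_eq_same, Finsupp.add_apply] at hi
      rcases Nat.lt_or_ge (a i) 1 with hai | hai
      · -- p i ≥ 1, use induction hypothesis
        have hpi : 1 ≤ p i := by omega
        obtain ⟨c, hc⟩ := exists_add_of_le ((Finsupp.single_le_iff).mpr hpi)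
        have hc' : c + Finsupp.single i 1 = p := by rw [hc]; abel
        have hxca : x = c + a := by
          apply add_right_cancel (b := Finsupp.single i 1)
          rw [hx, ← hc']; abel
        rcases ihm p hp i c hc' with h | h
        · left; rw [hxca]; exact Set.add_mem_add h ha
        · right; rw [hxca]; exact Set.add_mem_add h ha
      · obtain ⟨c, hc⟩ := exists_add_of_le ((Finsupp.single_le_iff).mpr hai)
        have hc' : c + Finsupp.single i 1 = a := by rw [hc]; abel
        have hxca : x = p + c := by
          apply add_right_cancel (b := Finsupp.single i 1)
          rw [hx, ← hc']; abel
        -- split p ∈ nfold (m+2) as q + a'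
        obtain ⟨q, hq, a', ha', rfl⟩ := Set.mem_add.mp hp
        have hca' := keyA S hS i (by rw [hc']; exact ha) ha'
        rcases hca' with h | h
        · left
          rw [hxca]
          have : q + a' + c = q + (c + a') := by abel
          rw [this]
          have h1 : c + a' ∈ nfold 1 (Atoms S) := by rw [nfold_one]; exact h
          exact nfold_add S (m + 1) 1 q (c + a') hq h1
        · right
          rw [hxca]
          have : q + a' + c = q + (c + a') := by abel
          rw [this]
          have h1 : c + a' ∈ nfold 2 (Atoms S) := by rw [nfold_two]; exact h
          have h2 := nfold_add S (m + 1) 2 q (c + a') hq h1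
          have he : m + 1 + 2 = m + 1 + 1 + 1 := by omega
          rw [he] at h2
          exact h2

end Aux

theorem statement5 (I : Set ℕ) (hI : I.Nonempty) (S : AddSubmonoid (↥I →₀ ℕ))
    (hS : IsGapAbsorbing S) (n : ℕ) (hn : 1 < n) :
    ∀ s ∈ nfold n (Atoms S), ∀ i : ↥I, ∀ x : ↥I →₀ ℕ,
      x + Finsupp.single i 1 = s →
      x ∈ nfold (n - 1) (Atoms S) ∪ nfold n (Atoms S) := by
  obtain ⟨m, rfl⟩ : ∃ m, n = m + 2 := ⟨n - 2, by omega⟩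
  intro s hs i x hx
  have := key S hS m s hs i x hx
  simpa using this
end

section
/- Let I be a nonempty set of non-negative integers and let S be a submonoid of ℕ^(I). The following are equivalent: (1) S is a gap absorbing monoid; (2) S is an ideal extension of ℕ^(I) and for every positive integer n, the set nA(S) \ (⋃_{i=0}^{n−1} iA(S)) is closed under intervals; (3) S is an ideal extension of ℕ^(I) and A(S) + A(S) is closed under intervals. -/
open Pointwise

namespace GapAux

variable {I : Set ℕ} {S : AddSubmonoid (↥I →₀ ℕ)}

lemma mem_sstar {x : ↥I →₀ ℕ} : x ∈ Sstar S ↔ x ∈ S ∧ ¬ x = 0 := by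
  simp [Sstar]

lemma atoms_subset_sstar : Atoms S ⊆ Sstar S := fun _ hx => hx.1

lemma sstar_up (hS : IsIdealExtension S) {s x : ↥I →₀ ℕ} (hs : s ∈ Sstar S) (h : s ≤ x) :
    x ∈ Sstar S := by
  obtain ⟨d, rfl⟩ := exists_add_of_le h
  exact hS s hs d

lemma addadd_subset_sstar : Atoms S + Atoms S ⊆ Sstar S := by
  rintro x hx
  rcases Set.mem_add.mp hx with ⟨a, ha, b, hb, rfl⟩
  refine mem_sstar.2 ⟨S.add_mem (mem_sstar.1 ha.1).1 (mem_sstar.1 hb.1).1, ?_⟩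
  intro h0
  exact (mem_sstar.1 ha.1).2 (add_eq_zero.mp h0).1

lemma nfold_subset : ∀ n, nfold n (Atoms S) ⊆ (S : Set (↥I →₀ ℕ))
  | 0 => by
      intro x hx
      simp only [nfold, Set.mem_singleton_iff] at hx
      rw [hx]
      exact S.zero_mem
  | (n+1) => by
      intro x hx
      simp only [nfold] at hx
      rcases Set.mem_add.mp hx with ⟨y, hy, a, ha, rfl⟩
      exact S.add_mem (nfold_subset n hy) (mem_sstar.1 ha.1).1

lemma mem_sstar_of_nfold {n : ℕ} (hn : 0 < n) {x : ↥I →₀ ℕ}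
    (hx : x ∈ nfold n (Atoms S)) : x ∈ Sstar S := by
  cases n with
  | zero => omega
  | succ m =>
    simp only [nfold] at hx
    rcases Set.mem_add.mp hx with ⟨y, hy, a, ha, rfl⟩
    refine mem_sstar.2 ⟨S.add_mem (nfold_subset m hy) (mem_sstar.1 ha.1).1, ?_⟩
    intro h0
    exact (mem_sstar.1 ha.1).2 (add_eq_zero.mp h0).2

lemma nfold_add_mem {X : Set (↥I →₀ ℕ)} :
    ∀ {n : ℕ} {y : ↥I →₀ ℕ}, y ∈ nfold n X → ∀ {m : ℕ} {x : ↥I →₀ ℕ},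
      x ∈ nfold m X → x + y ∈ nfold (m + n) X := by
  intro n
  induction n with
  | zero =>
    intro y hy m x hx
    simp only [nfold, Set.mem_singleton_iff] at hy
    subst hy
    simpa using hx
  | succ k ih =>
    intro y hy m x hx
    simp only [nfold] at hy ⊢
    rcases Set.mem_add.mp hy with ⟨y', hy', a, ha, rfl⟩
    exact Set.mem_add.mpr ⟨x + y', ih hy' hx, a, ha, (add_assoc x y' a)⟩

lemma mem_nfold_one {X : Set (↥I →₀ ℕ)} {x : ↥I →₀ ℕ} (hx : x ∈ X) : x ∈ nfold 1 X := by
  simp only [nfold]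
  exact Set.mem_add.mpr ⟨0, rfl, x, hx, zero_add x⟩

lemma mem_nfold_two {X : Set (↥I →₀ ℕ)} {x : ↥I →₀ ℕ} (hx : x ∈ X + X) : x ∈ nfold 2 X := by
  simp only [nfold]
  rcases Set.mem_add.mp hx with ⟨y, hy, z, hz, rfl⟩
  exact Set.mem_add.mpr ⟨y, mem_nfold_one hy, z, hz, rfl⟩

lemma of_union {x : ↥I →₀ ℕ} (hx : x ∈ Atoms S ∪ (Atoms S + Atoms S)) :
    ∃ j, 1 ≤ j ∧ j ≤ 2 ∧ x ∈ nfold j (Atoms S) := by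
  rcases hx with h | h
  · exact ⟨1, by omega, by omega, mem_nfold_one h⟩
  · exact ⟨2, by omega, by omega, mem_nfold_two h⟩

lemma exists_atom_factor : ∀ {s : ↥I →₀ ℕ}, s ∈ Sstar S →
    ∃ n, 1 ≤ n ∧ s ∈ nfold n (Atoms S) := by
  intro s
  induction s using WellFoundedLT.induction with
  | _ s ih =>
    intro hs
    by_cases hA : s ∈ Atoms S
    · exact ⟨1, le_refl 1, mem_nfold_one hA⟩
    · have hmem : s ∈ Sstar S + Sstar S := by
        by_contra hmem
        exact hA ⟨hs, hmem⟩
      rcases Set.mem_add.mp hmem with ⟨p, hp, q, hq, rfl⟩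
      have hq0 : 0 < q := pos_iff_ne_zero.mpr (mem_sstar.1 hq).2
      have hp0 : 0 < p := pos_iff_ne_zero.mpr (mem_sstar.1 hp).2
      obtain ⟨n1, h11, h12⟩ := ih p (lt_add_of_pos_right p hq0) hp
      obtain ⟨n2, h21, h22⟩ := ih q (lt_add_of_pos_left q hp0) hq
      exact ⟨n1 + n2, by omega, nfold_add_mem h22 h12⟩

lemma head_atom {s : ↥I →₀ ℕ} (hs : s ∈ Sstar S) :
    ∃ b ∈ Atoms S, ∃ r, r ∈ S ∧ s = b + r := by
  obtain ⟨n, hn, hmem⟩ := exists_atom_factor hs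
  cases n with
  | zero => omega
  | succ m =>
    simp only [nfold] at hmem
    rcases Set.mem_add.mp hmem with ⟨w, hw, b, hb, rfl⟩
    exact ⟨b, hb, w, nfold_subset m hw, add_comm w b⟩

lemma split_le {x a b : ↥I →₀ ℕ} (h : x ≤ a + b) :
    ∃ p q, p ≤ a ∧ q ≤ b ∧ x = p + q := by
  refine ⟨x - (x - a), x - a, tsub_tsub_le, tsub_le_iff_left.mpr h, ?_⟩
  rw [tsub_add_cancel_of_le tsub_le_self]

lemma tri (x : ↥I →₀ ℕ) : x = 0 ∨ x ∈ Sstar S ∨ x ∈ Gaps S := by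
  by_cases hx : x ∈ S
  · by_cases h0 : x = 0
    · exact Or.inl h0
    · exact Or.inr (Or.inl (mem_sstar.2 ⟨hx, h0⟩))
  · exact Or.inr (Or.inr hx)

lemma atom_of_le_atom (hS : IsIdealExtension S) {s a : ↥I →₀ ℕ}
    (hs : s ∈ Sstar S) (ha : a ∈ Atoms S) (h : s ≤ a) : s ∈ Atoms S := by
  refine ⟨hs, fun hmem => ?_⟩
  rcases Set.mem_add.mp hmem with ⟨p, hp, q, hq, rfl⟩
  obtain ⟨d, rfl⟩ := exists_add_of_le h
  exact ha.2 (Set.mem_add.mpr ⟨p, hp, q + d, hS q hq d, by rw [← add_assoc]⟩)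

lemma exists_atom_ge (hS : IsIdealExtension S) {s0 : ↥I →₀ ℕ} (hs0 : s0 ∈ Sstar S)
    {g : ↥I →₀ ℕ} (hg : g ∈ Gaps S) : ∃ a ∈ Atoms S, g ≤ a := by
  have hne : {x : ↥I →₀ ℕ | x ∈ Sstar S ∧ g ≤ x}.Nonempty :=
    ⟨s0 + g, hS s0 hs0 g, le_add_self⟩
  obtain ⟨t, ⟨ht, hgt⟩, hmin⟩ := wellFounded_lt.has_min _ hne
  refine ⟨t, ⟨ht, fun hmem => ?_⟩, hgt⟩
  rcases Set.mem_add.mp hmem with ⟨s1, h1, s2, h2, heq⟩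
  have hgt' : g ≤ s1 + s2 := heq ▸ hgt
  obtain ⟨g1, g2, hg1, hg2, hgeq⟩ := split_le hgt'
  have hy : s2 + g1 ∈ Sstar S := hS s2 h2 g1
  have hyT : g ≤ s2 + g1 := by
    rw [hgeq, add_comm s2 g1]
    exact add_le_add_right hg2 g1
  have hyle : s2 + g1 ≤ t := by
    rw [← heq, add_comm s1 s2]
    exact add_le_add_right hg1 s2
  have heq2 : s2 + g1 = t := (lt_or_eq_of_le hyle).resolve_left (hmin _ ⟨hy, hyT⟩)
  rw [← heq, add_comm s1 s2] at heq2
  have hgs : g1 = s1 := add_left_cancel heq2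
  have hs1g : s1 ≤ g := by
    rw [hgeq, ← hgs]
    exact le_self_add
  exact hg (sstar_up hS h1 hs1g).1

lemma ideal_of_ga (h : IsGapAbsorbing S) : IsIdealExtension S := by
  have atomabs : ∀ a ∈ Atoms S, ∀ x : ↥I →₀ ℕ, a + x ∈ Sstar S := by
    intro a ha x
    rcases tri (S := S) x with rfl | hx | hx
    · simpa using ha.1
    · exact mem_sstar.2 ⟨S.add_mem (mem_sstar.1 ha.1).1 (mem_sstar.1 hx).1,
        fun h0 => (mem_sstar.1 ha.1).2 (add_eq_zero.mp h0).1⟩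
    · have hmem := h.2 (Set.mem_add.mpr ⟨x, hx, a, ha, rfl⟩)
      rw [add_comm]
      rcases hmem with hA | hAA
      · exact hA.1
      · exact addadd_subset_sstar hAA
  intro s hs x
  obtain ⟨b, hb, r, hr, rfl⟩ := head_atom hs
  rw [add_assoc]
  exact atomabs b hb (r + x)

lemma key (h : IsGapAbsorbing S) (hS : IsIdealExtension S) :
    ∀ m : ℕ, ∀ v ∈ nfold m (Atoms S), ∀ s ∈ Sstar S, s ≤ v →
      ∃ i, 1 ≤ i ∧ i ≤ m ∧ s ∈ nfold i (Atoms S) := by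
  intro m
  induction m with
  | zero =>
    intro v hv s hs hsv
    simp only [nfold, Set.mem_singleton_iff] at hv
    subst hv
    exact absurd (nonpos_iff_eq_zero.mp hsv) (mem_sstar.1 hs).2
  | succ m ih =>
    intro v hv s hs hsv
    simp only [nfold] at hv
    rcases Set.mem_add.mp hv with ⟨v', hv', a, ha, rfl⟩
    obtain ⟨p, q, hpv, hqa, rfl⟩ := split_le hsv
    have hmof : p ∈ Gaps S → 1 ≤ m := by
      intro hp
      by_contra hm
      have hm0 : m = 0 := by omega
      subst hm0
      simp only [nfold, Set.mem_singleton_iff] at hv'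
      subst hv'
      have hp0 : p = 0 := nonpos_iff_eq_zero.mp hpv
      exact hp (by rw [hp0]; exact S.zero_mem)
    rcases tri (S := S) q with rfl | hq | hq
    · -- q = 0
      simp only [add_zero] at hs ⊢
      obtain ⟨i, h1, h2, h3⟩ := ih v' hv' p hs hpv
      exact ⟨i, h1, by omega, h3⟩
    · -- q ∈ S*
      have hqA : q ∈ Atoms S := atom_of_le_atom hS hq ha hqa
      rcases tri (S := S) p with rfl | hp | hp
      · simp only [zero_add] at hs ⊢
        exact ⟨1, le_refl 1, by omega, mem_nfold_one hqA⟩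
      · obtain ⟨i, h1, h2, h3⟩ := ih v' hv' p hp hpv
        refine ⟨i + 1, by omega, by omega, ?_⟩
        simp only [nfold]
        exact Set.mem_add.mpr ⟨p, h3, q, hqA, rfl⟩
      · have hm := hmof hp
        obtain ⟨j, hj1, hj2, hj3⟩ := of_union (h.2 (Set.mem_add.mpr ⟨p, hp, q, hqA, rfl⟩))
        exact ⟨j, hj1, by omega, hj3⟩
    · -- q ∈ Gaps
      rcases tri (S := S) p with rfl | hp | hp
      · simp only [zero_add] at hs
        exact absurd hs.1 hq
      · obtain ⟨i, h1, h2, h3⟩ := ih v' hv' p hp hpv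
        cases i with
        | zero => omega
        | succ k =>
          simp only [nfold] at h3
          rcases Set.mem_add.mp h3 with ⟨w, hw, c, hc, rfl⟩
          obtain ⟨j, hj1, hj2, hj3⟩ := of_union (h.2 (Set.mem_add.mpr ⟨q, hq, c, hc, rfl⟩))
          refine ⟨k + j, by omega, by omega, ?_⟩
          have hmem : w + (q + c) ∈ nfold (k + j) (Atoms S) := nfold_add_mem hj3 hw
          have heq : w + c + q = w + (q + c) := by
            rw [add_assoc, add_comm c q]
          rw [heq]
          exact hmem
      · have hm := hmof hp
        have hun := h.1 (Set.mem_add.mpr ⟨p, hp, q, hq, rfl⟩)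
        rcases hun with (hG | hA) | hAA
        · exact absurd hs.1 hG
        · exact ⟨1, by omega, by omega, mem_nfold_one hA⟩
        · exact ⟨2, by omega, by omega, mem_nfold_two hAA⟩

lemma imp12 (h : IsGapAbsorbing S) :
    IsIdealExtension S ∧ ∀ n : ℕ, 0 < n → ClosedUnderIntervals
      (nfold n (Atoms S) \ ⋃ i ∈ Finset.range n, nfold i (Atoms S)) := by
  have hS := ideal_of_ga h
  refine ⟨hS, fun n hn => ?_⟩
  intro u hu v hv huv x hx
  obtain ⟨hxu, hxv⟩ := Set.mem_Icc.mp hx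
  have hu' : u ∈ Sstar S := mem_sstar_of_nfold hn hu.1
  have hx' : x ∈ Sstar S := sstar_up hS hu' hxu
  have hnotlow : ∀ i, i < n → x ∉ nfold i (Atoms S) := by
    intro i hi hxi
    rcases Nat.eq_zero_or_pos i with rfl | hi0
    · simp only [nfold, Set.mem_singleton_iff] at hxi
      exact (mem_sstar.1 hx').2 hxi
    · obtain ⟨j, hj1, hj2, hj3⟩ := key h hS i x hxi u hu' hxu
      exact hu.2 (Set.mem_biUnion (Finset.mem_range.mpr (by omega)) hj3)
  constructor
  · obtain ⟨j, hj1, hj2, hj3⟩ := key h hS n v hv.1 x hx' hxv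
    rcases lt_or_eq_of_le hj2 with hlt | heq
    · exact absurd hj3 (hnotlow j hlt)
    · rw [← heq]
      exact hj3
  · intro hxlow
    simp only [Set.mem_iUnion, Finset.mem_range] at hxlow
    obtain ⟨i, hi, hxi⟩ := hxlow
    exact hnotlow i hi hxi

lemma nfold_one_eq (X : Set (↥I →₀ ℕ)) : nfold 1 X = X := by
  ext x
  constructor
  · intro hx
    simp only [nfold] at hx
    rcases Set.mem_add.mp hx with ⟨y, hy, z, hz, rfl⟩
    rw [Set.mem_singleton_iff] at hy
    subst hy
    rwa [zero_add]
  · exact fun hx => mem_nfold_one hx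

lemma imp23 (h : IsIdealExtension S ∧ ∀ n : ℕ, 0 < n → ClosedUnderIntervals
      (nfold n (Atoms S) \ ⋃ i ∈ Finset.range n, nfold i (Atoms S))) :
    IsIdealExtension S ∧ ClosedUnderIntervals (Atoms S + Atoms S) := by
  refine ⟨h.1, ?_⟩
  have h2 := h.2 2 (by omega)
  have e : nfold 2 (Atoms S) \ ⋃ i ∈ Finset.range 2, nfold i (Atoms S)
      = Atoms S + Atoms S := by
    have h2e : nfold 2 (Atoms S) = Atoms S + Atoms S := by
      show nfold 1 (Atoms S) + Atoms S = _
      rw [nfold_one_eq]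
    ext x
    simp only [Set.mem_diff, Set.mem_iUnion, Finset.mem_range, h2e]
    constructor
    · rintro ⟨h1, _⟩
      exact h1
    · intro hx
      refine ⟨hx, ?_⟩
      rintro ⟨i, hi, hxi⟩
      interval_cases i
      · simp only [nfold, Set.mem_singleton_iff] at hxi
        rcases Set.mem_add.mp hx with ⟨a, ha, b, hb, rfl⟩
        exact (mem_sstar.1 ha.1).2 (add_eq_zero.mp hxi).1
      · rw [nfold_one_eq] at hxi
        exact hxi.2 (Set.add_subset_add atoms_subset_sstar atoms_subset_sstar hx)
  rw [← e]
  exact h2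

lemma imp31 (h : IsIdealExtension S ∧ ClosedUnderIntervals (Atoms S + Atoms S)) :
    IsGapAbsorbing S := by
  obtain ⟨hS, hC⟩ := h
  have main : ∀ w ∈ Sstar S, w ∉ Atoms S → ∀ v ∈ Atoms S + Atoms S, w ≤ v →
      w ∈ Atoms S + Atoms S := by
    intro w hw hwA v hv hwv
    have hmem : w ∈ Sstar S + Sstar S := by
      by_contra hmem
      exact hwA ⟨hw, hmem⟩
    rcases Set.mem_add.mp hmem with ⟨s1, h1, s2, h2, rfl⟩
    obtain ⟨b1, hb1, r1, hr1, he1⟩ := head_atom h1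
    obtain ⟨b2, hb2, r2, hr2, he2⟩ := head_atom h2
    have hu : b1 + b2 ∈ Atoms S + Atoms S := Set.mem_add.mpr ⟨b1, hb1, b2, hb2, rfl⟩
    have hule : b1 + b2 ≤ s1 + s2 := by
      rw [he1, he2]
      exact add_le_add le_self_add le_self_add
    exact hC _ hu _ hv (le_trans hule hwv) (Set.mem_Icc.mpr ⟨hule, hwv⟩)
  constructor
  · intro w hw
    rcases Set.mem_add.mp hw with ⟨g, hg, h', hh, rfl⟩
    by_cases hwS : g + h' ∈ S
    · have hw0 : ¬ g + h' = 0 := by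
        intro h0
        exact hg (by rw [(add_eq_zero.mp h0).1]; exact S.zero_mem)
      have hws : g + h' ∈ Sstar S := mem_sstar.2 ⟨hwS, hw0⟩
      by_cases hwA : g + h' ∈ Atoms S
      · exact Or.inl (Or.inr hwA)
      · obtain ⟨a1, ha1, hga1⟩ := exists_atom_ge hS hws hg
        obtain ⟨a2, ha2, hha2⟩ := exists_atom_ge hS hws hh
        exact Or.inr (main _ hws hwA (a1 + a2)
          (Set.mem_add.mpr ⟨a1, ha1, a2, ha2, rfl⟩) (add_le_add hga1 hha2))
    · exact Or.inl (Or.inl hwS)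
  · intro w hw
    rcases Set.mem_add.mp hw with ⟨g, hg, a, ha, rfl⟩
    have hws : g + a ∈ Sstar S := by
      rw [add_comm]
      exact hS a ha.1 g
    by_cases hwA : g + a ∈ Atoms S
    · exact Or.inl hwA
    · obtain ⟨a1, ha1, hga1⟩ := exists_atom_ge hS hws hg
      exact Or.inr (main _ hws hwA (a1 + a)
        (Set.mem_add.mpr ⟨a1, ha1, a, ha, rfl⟩) (add_le_add_left hga1 a))

end GapAux

theorem statement6 (I : Set ℕ) (hI : I.Nonempty) (S : AddSubmonoid (↥I →₀ ℕ)) :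
    List.TFAE
      [IsGapAbsorbing S,
       IsIdealExtension S ∧ ∀ n : ℕ, 0 < n →
         ClosedUnderIntervals
           (nfold n (Atoms S) \ ⋃ i ∈ Finset.range n, nfold i (Atoms S)),
       IsIdealExtension S ∧ ClosedUnderIntervals (Atoms S + Atoms S)] := by
  tfae_have 1 → 2 := GapAux.imp12
  tfae_have 2 → 3 := GapAux.imp23
  tfae_have 3 → 1 := GapAux.imp31
  tfae_finish
end

section
/- Let I be a nonempty set of non-negative integers and let S be an ideal extension of ℕ^(I). Suppose that for every s, t ∈ S with s ≤ t one has ℓ(s) ≤ ℓ(t). Then S is a gap absorbing monoid. -/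
open Pointwise

section Aux

open Finsupp

variable {σ : Type*}

private lemma deg_add_s8 (a b : σ →₀ ℕ) : (a + b).degree = a.degree + b.degree := by
  simp only [Finsupp.degree_eq_weight_one]
  exact map_add _ a b

private lemma eq_of_le_of_deg_le {a b : σ →₀ ℕ} (h : a ≤ b) (hd : b.degree ≤ a.degree) :
    a = b := by
  obtain ⟨c, rfl⟩ := exists_add_of_le h
  have hc : c.degree = 0 := by have := deg_add_s8 a c; omega
  rw [Finsupp.degree_eq_zero_iff] at hc
  simp [hc]

private lemma star_up {S : AddSubmonoid (σ →₀ ℕ)} (hS : IsIdealExtension S)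
    {x y : σ →₀ ℕ} (hx : x ∈ Sstar S) (hxy : x ≤ y) : y ∈ Sstar S := by
  obtain ⟨c, rfl⟩ := exists_add_of_le hxy
  exact hS x hx c

private lemma nfold_one_s8 {M : Type*} [AddCommMonoid M] (X : Set M) : nfold 1 X = X := by
  show nfold 0 X + X = X
  ext x
  simp [nfold, Set.mem_add]

private lemma nfold_two_s8 {M : Type*} [AddCommMonoid M] (X : Set M) : nfold 2 X = X + X := by
  show nfold 1 X + X = X + X
  rw [nfold_one_s8]

private lemma mem_nfold_add {M : Type*} [AddCommMonoid M] {X : Set M} {m : ℕ} :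
    ∀ {n : ℕ} {a b : M}, a ∈ nfold m X → b ∈ nfold n X → a + b ∈ nfold (m + n) X := by
  intro n
  induction n with
  | zero =>
    intro a b ha hb
    have hb0 : b = 0 := by simpa [nfold] using hb
    simpa [hb0] using ha
  | succ n ih =>
    intro a b ha hb
    rw [show nfold (n+1) X = nfold n X + X from rfl, Set.mem_add] at hb
    obtain ⟨b', hb', x, hx, rfl⟩ := hb
    show a + (b' + x) ∈ nfold (m + n) X + X
    rw [← add_assoc]
    exact Set.add_mem_add (ih ha hb') hx

private lemma exists_len (S : AddSubmonoid (σ →₀ ℕ)) (s : σ →₀ ℕ) (hs : s ∈ Sstar S) :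
    ∃ n, 0 < n ∧ s ∈ nfold n (Atoms S) := by
  generalize hd : s.degree = d
  induction d using Nat.strong_induction_on generalizing s with
  | _ d ih =>
    by_cases ha : s ∈ Atoms S
    · exact ⟨1, one_pos, by rwa [nfold_one_s8]⟩
    · have hsum : s ∈ Sstar S + Sstar S := by
        by_contra hc
        exact ha ⟨hs, hc⟩
      rw [Set.mem_add] at hsum
      obtain ⟨u, hu, t, ht, rfl⟩ := hsum
      have hu0 : u ≠ 0 := by
        intro h0; exact hu.2 (by simp [h0])
      have ht0 : t ≠ 0 := by
        intro h0; exact ht.2 (by simp [h0])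
      have hdu : u.degree ≠ 0 := fun h => hu0 ((Finsupp.degree_eq_zero_iff u).mp h)
      have hdt : t.degree ≠ 0 := fun h => ht0 ((Finsupp.degree_eq_zero_iff t).mp h)
      have hdsum := deg_add_s8 u t
      obtain ⟨nu, hnu, hmu⟩ := ih u.degree (by omega) u hu rfl
      obtain ⟨nt, hnt, hmt⟩ := ih t.degree (by omega) t ht rfl
      exact ⟨nu + nt, by omega, mem_nfold_add hmu hmt⟩

private lemma exists_atom_above {S : AddSubmonoid (σ →₀ ℕ)} (hS : IsIdealExtension S)
    {h u : σ →₀ ℕ} (hh : h ∈ Gaps S) (hu : u ∈ Sstar S) (hhu : h ≤ u) :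
    ∃ v ∈ Atoms S, h ≤ v := by
  set T : Set (σ →₀ ℕ) := {w | w ∈ Sstar S ∧ h ≤ w} with hT
  have hTne : (Finsupp.degree '' T).Nonempty := ⟨u.degree, u, ⟨hu, hhu⟩, rfl⟩
  obtain ⟨v, hvT, hvd⟩ := Nat.sInf_mem hTne
  refine ⟨v, ⟨hvT.1, ?_⟩, hvT.2⟩
  intro hsum
  rw [Set.mem_add] at hsum
  obtain ⟨s, hsS, t, htS, hst⟩ := hsum
  set p : σ →₀ ℕ := h ⊓ s with hp
  set q : σ →₀ ℕ := h - p with hq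
  have hps : p ≤ s := inf_le_right
  have hph : p ≤ h := inf_le_left
  have hqp : q + p = h := tsub_add_cancel_of_le hph
  have hhv : h ≤ s + t := hst ▸ hvT.2
  have hqt : q ≤ t := by
    rw [Finsupp.le_def]
    intro i
    have h1 : h i ≤ s i + t i := by
      have := (Finsupp.le_def.mp hhv) i
      simpa [Finsupp.add_apply] using this
    have h2 : q i = h i - min (h i) (s i) := by
      rw [hq, Finsupp.tsub_apply, hp, Finsupp.inf_apply]
    omega
  have hv'S : s + q ∈ Sstar S := hS s hsS q
  have hhv' : h ≤ s + q := by
    rw [← hqp, add_comm q p]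
    exact add_le_add_left hps q
  have hv'T : s + q ∈ T := ⟨hv'S, hhv'⟩
  have hdle : v.degree ≤ (s + q).degree := hvd ▸ Nat.sInf_le ⟨s + q, hv'T, rfl⟩
  have hv'v : s + q ≤ v := by
    rw [← hst]
    exact add_le_add_right hqt s
  have heq : s + q = v := eq_of_le_of_deg_le hv'v hdle
  have hqt' : q = t := by
    have : s + q = s + t := heq.trans hst.symm
    exact add_left_cancel this
  have hth : t ≤ h := hqt' ▸ (hq ▸ tsub_le_self)
  exact hh (star_up hS htS hth).1

private lemma key_s8 {S : AddSubmonoid (σ →₀ ℕ)}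
    (hmono : ∀ s ∈ S, ∀ t ∈ S, s ≤ t → minLen S s ≤ minLen S t)
    {x v1 v2 : σ →₀ ℕ} (hx : x ∈ Sstar S) (h1 : v1 ∈ Atoms S) (h2 : v2 ∈ Atoms S)
    (hle : x ≤ v1 + v2) : x ∈ Atoms S ∪ (Atoms S + Atoms S) := by
  have hv12 : v1 + v2 ∈ nfold 2 (Atoms S) := by
    rw [nfold_two_s8]
    exact Set.add_mem_add h1 h2
  have hL2 : minLen S (v1 + v2) ≤ 2 := Nat.sInf_le hv12
  have hvS : v1 + v2 ∈ S := S.add_mem h1.1.1 h2.1.1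
  have hle2 : minLen S x ≤ 2 := le_trans (hmono x hx.1 _ hvS hle) hL2
  obtain ⟨n, hn, hmem⟩ := exists_len S x hx
  have hmin : minLen S x ∈ Lset S x := Nat.sInf_mem ⟨n, hmem⟩
  have hpos : minLen S x ≠ 0 := by
    intro h0
    rw [h0] at hmin
    have : x = 0 := by simpa [Lset, nfold] using hmin
    exact hx.2 this
  have hcase : minLen S x = 1 ∨ minLen S x = 2 := by omega
  rcases hcase with hc | hc
  · left
    rw [hc] at hmin
    have : x ∈ nfold 1 (Atoms S) := hmin
    rwa [nfold_one_s8] at this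
  · right
    rw [hc] at hmin
    have : x ∈ nfold 2 (Atoms S) := hmin
    rwa [nfold_two_s8] at this

end Aux

theorem statement8 (I : Set ℕ) (hI : I.Nonempty) (S : AddSubmonoid (↥I →₀ ℕ))
    (hS : IsIdealExtension S)
    (hmono : ∀ s ∈ S, ∀ t ∈ S, s ≤ t → minLen S s ≤ minLen S t) :
    IsGapAbsorbing S := by
  constructor
  · intro x hx
    rw [Set.mem_add] at hx
    obtain ⟨h1, hh1, h2, hh2, rfl⟩ := hx
    by_cases hmem : h1 + h2 ∈ S
    · have hx0 : h1 + h2 ≠ 0 := by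
        intro h0
        rw [add_eq_zero] at h0
        exact hh1 (h0.1 ▸ S.zero_mem)
      have hxs : h1 + h2 ∈ Sstar S := ⟨hmem, by simpa using hx0⟩
      obtain ⟨v1, ha1, hle1⟩ := exists_atom_above hS hh1 hxs le_self_add
      obtain ⟨v2, ha2, hle2⟩ := exists_atom_above hS hh2 hxs le_add_self
      have := key_s8 hmono hxs ha1 ha2 (add_le_add hle1 hle2)
      rcases this with h | h
      · exact Or.inl (Or.inr h)
      · exact Or.inr h
    · exact Or.inl (Or.inl hmem)
  · intro x hx
    rw [Set.mem_add] at hx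
    obtain ⟨h, hh, a, ha, rfl⟩ := hx
    have hxs : h + a ∈ Sstar S := by
      have := hS a ha.1 h
      rwa [add_comm] at this
    obtain ⟨v, hav, hle⟩ := exists_atom_above hS hh hxs le_self_add
    exact key_s8 hmono hxs hav ha (add_le_add_left hle a)
end

section
/- Let I be a nonempty set of non-negative integers and let S be a submonoid of ℕ^(I). Then S is gap absorbing if and only if S is an ideal extension of ℕ^(I) and for every a, b ∈ A(S) and every i in the support of a ∨ b (the componentwise maximum of a and b), the inequality ℓ(a + b − e_i) ≤ 2 holds. -/
open Pointwise

section Aux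
variable {ι : Type*}

def degF (x : ι →₀ ℕ) : ℕ := x.sum fun _ n => n

lemma degF_add (x y : ι →₀ ℕ) : degF (x + y) = degF x + degF y :=
  Finsupp.sum_add_index' (fun _ => rfl) (fun _ _ _ => rfl)

lemma degF_pos {x : ι →₀ ℕ} (hx : x ≠ 0) : 0 < degF x := by
  obtain ⟨i, hi⟩ : ∃ i, x i ≠ 0 := by
    by_contra h; push_neg at h; exact hx (Finsupp.ext fun i => h i)
  have : x i ≤ degF x :=
    Finset.single_le_sum (fun _ _ => Nat.zero_le _) (Finsupp.mem_support_iff.2 hi)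
  omega

lemma degF_eq_zero {x : ι →₀ ℕ} (hx : degF x = 0) : x = 0 := by
  by_contra h; have := degF_pos h; omega

lemma degF_zero : degF (0 : ι →₀ ℕ) = 0 := by simp [degF]

lemma addF_ne_zero {x : ι →₀ ℕ} (y : ι →₀ ℕ) (hx : x ≠ 0) : x + y ≠ 0 := by
  intro h
  have h1 : degF (x + y) = 0 := by rw [h, degF_zero]
  rw [degF_add] at h1
  exact hx (degF_eq_zero (by omega))

lemma degF_lt {x y : ι →₀ ℕ} (hle : x ≤ y) (hne : x ≠ y) : degF x < degF y := by
  obtain ⟨w, rfl⟩ := le_iff_exists_add.1 hle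
  have hw : w ≠ 0 := by rintro rfl; exact hne (by simp)
  have := degF_pos hw
  rw [degF_add]; omega

lemma degF_single (i : ι) : degF (Finsupp.single i 1) = 1 := by
  simp [degF, Finsupp.sum_single_index]

variable (S : AddSubmonoid (ι →₀ ℕ))

lemma mem_Sstar {s : ι →₀ ℕ} : s ∈ Sstar S ↔ s ∈ S ∧ s ≠ 0 := by
  simp [Sstar, Set.mem_diff]

lemma Atoms_subset : Atoms S ⊆ Sstar S := fun _ h => h.1

lemma Sstar_add_mem {s t : ι →₀ ℕ} (hs : s ∈ Sstar S) (ht : t ∈ S) : s + t ∈ Sstar S := by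
  rw [mem_Sstar] at hs ⊢
  exact ⟨S.add_mem hs.1 ht, addF_ne_zero t hs.2⟩

lemma P_subset_Sstar {x : ι →₀ ℕ} (hx : x ∈ Atoms S ∪ (Atoms S + Atoms S)) : x ∈ Sstar S := by
  rcases hx with h | h
  · exact h.1
  · obtain ⟨a, ha, b, hb, rfl⟩ := h
    exact Sstar_add_mem S ha.1 hb.1.1

lemma exists_atom_add : ∀ n (s : ι →₀ ℕ), degF s ≤ n → s ∈ Sstar S →
    ∃ a ∈ Atoms S, ∃ t ∈ S, s = a + t := by
  intro n
  induction n with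
  | zero =>
    intro s hd hs
    exact absurd (degF_eq_zero (Nat.le_zero.1 hd)) ((mem_Sstar S).1 hs).2
  | succ n ih =>
    intro s hd hs
    by_cases ha : s ∈ Atoms S
    · exact ⟨s, ha, 0, S.zero_mem, (add_zero s).symm⟩
    · have hsum : s ∈ Sstar S + Sstar S := by
        by_contra h; exact ha ⟨hs, h⟩
      rw [Set.mem_add] at hsum
      obtain ⟨u, hu, v, hv, huv⟩ := hsum
      replace huv : u + v = s := huv
      have hdv := degF_pos ((mem_Sstar S).1 hv).2
      have hdu : degF u ≤ n := by
        have h := degF_add u v; rw [huv] at h; omega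
      obtain ⟨a, ha', t, ht, hut⟩ := ih u hdu hu
      exact ⟨a, ha', t + v, S.add_mem ht ((mem_Sstar S).1 hv).1,
        by rw [← huv, hut, add_assoc]⟩

lemma exists_nfold : ∀ n (s : ι →₀ ℕ), degF s ≤ n → s ∈ Sstar S →
    ∃ k, s ∈ nfold k (Atoms S) := by
  intro n
  induction n with
  | zero =>
    intro s hd hs
    exact absurd (degF_eq_zero (Nat.le_zero.1 hd)) ((mem_Sstar S).1 hs).2
  | succ n ih =>
    intro s hd hs
    obtain ⟨a, ha, t, ht, hat⟩ := exists_atom_add S (n+1) s hd hs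
    by_cases h0 : t = 0
    · refine ⟨1, ?_⟩
      show s ∈ nfold 0 (Atoms S) + Atoms S
      rw [Set.mem_add]
      exact ⟨0, rfl, a, ha, by simp [hat, h0]⟩
    · have htS : t ∈ Sstar S := (mem_Sstar S).2 ⟨ht, h0⟩
      have hda := degF_pos ((mem_Sstar S).1 ha.1).2
      have hdt : degF t ≤ n := by
        have h := degF_add a t; rw [hat, h] at hd; omega
      obtain ⟨k, hk⟩ := ih t hdt htS
      refine ⟨k + 1, ?_⟩
      show s ∈ nfold k (Atoms S) + Atoms S
      rw [Set.mem_add]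
      exact ⟨t, hk, a, ha, by rw [add_comm, hat]⟩

lemma minLen_le {s : ι →₀ ℕ} {k : ℕ} (h : s ∈ nfold k (Atoms S)) : minLen S s ≤ k :=
  Nat.sInf_le h

lemma mem_nfold_one {a : ι →₀ ℕ} (ha : a ∈ Atoms S) : a ∈ nfold 1 (Atoms S) := by
  show a ∈ nfold 0 (Atoms S) + Atoms S
  rw [Set.mem_add]
  exact ⟨0, rfl, a, ha, zero_add a⟩

lemma mem_nfold_two {a b : ι →₀ ℕ} (ha : a ∈ Atoms S) (hb : b ∈ Atoms S) :
    a + b ∈ nfold 2 (Atoms S) := by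
  show a + b ∈ nfold 1 (Atoms S) + Atoms S
  rw [Set.mem_add]
  exact ⟨a, mem_nfold_one S ha, b, hb, rfl⟩

lemma minLen_le_two_of_P {s : ι →₀ ℕ} (h : s ∈ Atoms S ∪ (Atoms S + Atoms S)) :
    minLen S s ≤ 2 := by
  rcases h with h | ⟨a, ha, b, hb, rfl⟩
  · exact le_trans (minLen_le S (mem_nfold_one S h)) one_le_two
  · exact minLen_le S (mem_nfold_two S ha hb)

lemma P_of_minLen {s : ι →₀ ℕ} (hs : s ∈ Sstar S) (h : minLen S s ≤ 2) :
    s ∈ Atoms S ∪ (Atoms S + Atoms S) := by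
  obtain ⟨k, hk⟩ := exists_nfold S (degF s) s le_rfl hs
  have hne : (Lset S s).Nonempty := ⟨k, hk⟩
  have hmem : minLen S s ∈ Lset S s := Nat.sInf_mem hne
  set m := minLen S s with hm
  interval_cases m
  · exact absurd hmem ((mem_Sstar S).1 hs).2
  · have hmem1 : s ∈ nfold 0 (Atoms S) + Atoms S := hmem
    rw [Set.mem_add] at hmem1
    obtain ⟨z, hz, a, ha, hza⟩ := hmem1
    replace hza : z + a = s := hza
    rcases hz with rfl
    rw [zero_add] at hza
    exact Or.inl (hza ▸ ha)
  · have hmem1 : s ∈ nfold 1 (Atoms S) + Atoms S := hmem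
    rw [Set.mem_add] at hmem1
    obtain ⟨u, hu, b, hb, hub⟩ := hmem1
    replace hub : u + b = s := hub
    have hu1 : u ∈ nfold 0 (Atoms S) + Atoms S := hu
    rw [Set.mem_add] at hu1
    obtain ⟨z, hz, a, ha, hza⟩ := hu1
    replace hza : z + a = u := hza
    rcases hz with rfl
    rw [zero_add] at hza
    exact Or.inr (hub ▸ Set.add_mem_add (hza ▸ ha) hb)

end Aux

section Main
variable {ι : Type*} (S : AddSubmonoid (ι →₀ ℕ))

lemma idealExt_of_GA (hGA : IsGapAbsorbing S) : IsIdealExtension S := by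
  intro s hs x
  by_cases hx : x ∈ S
  · exact Sstar_add_mem S hs hx
  · have hxG : x ∈ Gaps S := hx
    obtain ⟨a, ha, t, ht, hat⟩ := exists_atom_add S (degF s) s le_rfl hs
    have hxa : x + a ∈ Gaps S + Atoms S := Set.add_mem_add hxG ha
    have h3 : x + a ∈ Sstar S := P_subset_Sstar S (hGA.2 hxa)
    have he : s + x = (x + a) + t := by rw [hat]; abel
    rw [he]
    exact Sstar_add_mem S h3 ht

lemma F2aux (hGA : IsGapAbsorbing S) {a b : ι →₀ ℕ} (ha : a ∈ Atoms S) (hb : b ∈ Atoms S)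
    {i : ι} (hai : a i ≠ 0) (c : ι →₀ ℕ) (hc : c + Finsupp.single i 1 = a + b) :
    minLen S c ≤ 2 := by
  have hIE := idealExt_of_GA S hGA
  have hsle : Finsupp.single i 1 ≤ a := Finsupp.single_le_iff.2 (by omega)
  obtain ⟨h', hh'⟩ := le_iff_exists_add.1 hsle
  have hcb : c = h' + b := by
    have h1 : c + Finsupp.single i 1 = (h' + b) + Finsupp.single i 1 := by
      rw [hc, hh']; abel
    exact add_right_cancel h1
  by_cases h0 : h' = 0
  · rw [hcb, h0, zero_add]
    exact le_trans (minLen_le S (mem_nfold_one S hb)) one_le_two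
  by_cases hS : h' ∈ S
  · have hh'S : h' ∈ Sstar S := ⟨hS, h0⟩
    obtain ⟨a', ha', t, ht, h't⟩ := exists_atom_add S (degF h') h' le_rfl hh'S
    by_cases ht0 : t = 0
    · rw [hcb, h't, ht0, add_zero]
      exact minLen_le_two_of_P S (Or.inr (Set.add_mem_add ha' hb))
    · exfalso
      have htS : t ∈ Sstar S := ⟨ht, ht0⟩
      have h1 : t + Finsupp.single i 1 ∈ Sstar S := hIE t htS _
      have h2 : a' + (t + Finsupp.single i 1) = a := by rw [hh', h't]; abel
      exact ha.2 (h2 ▸ Set.add_mem_add (Atoms_subset S ha') h1)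
  · have hG : h' ∈ Gaps S := hS
    have h2 := hGA.2 (Set.add_mem_add hG hb)
    rw [hcb]
    exact minLen_le_two_of_P S h2

lemma Sstar_upper (hIE : IsIdealExtension S) {x y : ι →₀ ℕ} (hx : x ∈ Sstar S)
    (hxy : x ≤ y) : y ∈ Sstar S := by
  obtain ⟨w, rfl⟩ := le_iff_exists_add.1 hxy
  exact hIE x hx w

lemma strip (hIE : IsIdealExtension S)
    (hstar : ∀ a ∈ Atoms S, ∀ b ∈ Atoms S, ∀ i ∈ (a ⊔ b).support,
      ∀ c : ι →₀ ℕ, c + Finsupp.single i 1 = a + b → minLen S c ≤ 2)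
    {y c : ι →₀ ℕ} {i : ι} (hy : y ∈ Atoms S ∪ (Atoms S + Atoms S))
    (hc : c ∈ Sstar S) (hci : c + Finsupp.single i 1 = y) :
    c ∈ Atoms S ∪ (Atoms S + Atoms S) := by
  rcases hy with hy | hy
  · obtain ⟨b, hb, t, ht, hbt⟩ := exists_atom_add S (degF c) c le_rfl hc
    by_cases ht0 : t = 0
    · exact Or.inl (by rw [hbt, ht0, add_zero]; exact hb)
    · exfalso
      have h1 : t + Finsupp.single i 1 ∈ Sstar S := hIE t ⟨ht, ht0⟩ _
      have h2 : b + (t + Finsupp.single i 1) = y := by rw [← hci, hbt]; abel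
      exact hy.2 (h2 ▸ Set.add_mem_add (Atoms_subset S hb) h1)
  · rw [Set.mem_add] at hy
    obtain ⟨a, haA, b, hbA, hab⟩ := hy
    replace hab : a + b = y := hab
    have hyi : y i ≠ 0 := by
      have h : c i + (Finsupp.single i 1) i = y i := by
        rw [← hci]; rfl
      rw [Finsupp.single_eq_same] at h
      omega
    have hiM : i ∈ (a ⊔ b).support := by
      rw [Finsupp.mem_support_iff]
      have h1 : a i + b i = y i := by rw [← hab]; simp
      have h2 : a i ≤ (a ⊔ b) i := Finsupp.le_def.1 le_sup_left i
      have h3 : b i ≤ (a ⊔ b) i := Finsupp.le_def.1 le_sup_right i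
      omega
    exact P_of_minLen S hc (hstar a haA b hbA i hiM c (hci.trans hab.symm))

lemma stripStar (hIE : IsIdealExtension S)
    (hstar : ∀ a ∈ Atoms S, ∀ b ∈ Atoms S, ∀ i ∈ (a ⊔ b).support,
      ∀ c : ι →₀ ℕ, c + Finsupp.single i 1 = a + b → minLen S c ≤ 2) :
    ∀ n (y z : ι →₀ ℕ), degF y ≤ n → y ∈ Atoms S ∪ (Atoms S + Atoms S) →
      z ∈ Sstar S → z ≤ y → z ∈ Atoms S ∪ (Atoms S + Atoms S) := by
  intro n
  induction n with
  | zero =>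
    intro y z hd hy hz hzy
    exact absurd (degF_eq_zero (Nat.le_zero.1 hd))
      ((mem_Sstar S).1 (P_subset_Sstar S hy)).2
  | succ n ih =>
    intro y z hd hy hz hzy
    by_cases hzy' : z = y
    · exact hzy' ▸ hy
    · obtain ⟨i, hzi⟩ : ∃ i, z i ≠ y i := by
        by_contra h; push_neg at h; exact hzy' (Finsupp.ext h)
      have hle := Finsupp.le_def.1 hzy
      have hyi : 1 ≤ y i := by have := hle i; omega
      obtain ⟨c, hcy⟩ := le_iff_exists_add.1 (Finsupp.single_le_iff.2 hyi)
      have hci : c + Finsupp.single i 1 = y := by rw [hcy, add_comm]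
      have hzc : z ≤ c := by
        rw [Finsupp.le_def]; intro j
        have h1 : y j = Finsupp.single i 1 j + c j := by rw [hcy]; simp
        have h2 := hle j
        by_cases hj : j = i
        · subst hj
          rw [Finsupp.single_eq_same] at h1
          omega
        · rw [Finsupp.single_eq_of_ne' (fun he => hj (he.symm))] at h1
          omega
      have hcs : c ∈ Sstar S := Sstar_upper S hIE hz hzc
      have hcP := strip S hIE hstar hy hcs hci
      have hdc : degF c ≤ n := by
        have h := degF_add c (Finsupp.single i 1)
        rw [hci, degF_single] at h
        omega
      exact ih c z hdc hcP hz hzc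

lemma above (hIE : IsIdealExtension S) :
    ∀ n (z d : ι →₀ ℕ), degF z ≤ n → z ∈ Sstar S → d ≤ z → d ∉ Sstar S →
      ∃ b ∈ Atoms S, d ≤ b := by
  intro n
  induction n with
  | zero =>
    intro z d hd hz _ _
    exact absurd (degF_eq_zero (Nat.le_zero.1 hd)) ((mem_Sstar S).1 hz).2
  | succ n ih =>
    intro z d hdeg hz hdz hdS
    by_cases hzA : z ∈ Atoms S
    · exact ⟨z, hzA, hdz⟩
    · have hsum : z ∈ Sstar S + Sstar S := by
        by_contra h; exact hzA ⟨hz, h⟩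
      rw [Set.mem_add] at hsum
      obtain ⟨s1, hs1, s2, hs2, h12⟩ := hsum
      replace h12 : s1 + s2 = z := h12
      have hz'z : s1 ⊔ d ≤ z := sup_le (h12 ▸ le_self_add) hdz
      have hz'S : s1 ⊔ d ∈ Sstar S := Sstar_upper S hIE hs1 le_sup_left
      have hne : s1 ⊔ d ≠ z := by
        intro he
        have hs2d : s2 ≤ d := by
          rw [Finsupp.le_def]; intro j
          have h1 : s1 j + s2 j = z j := by rw [← h12]; simp
          have h2 : z j = s1 j ⊔ d j := by
            rw [← he]; exact Finsupp.sup_apply _ _ _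
          have h3 : s1 j ⊔ d j ≤ s1 j + d j :=
            sup_le (Nat.le_add_right _ _) (Nat.le_add_left _ _)
          omega
        exact hdS (Sstar_upper S hIE hs2 hs2d)
      have hdlt : degF (s1 ⊔ d) < degF z := degF_lt hz'z hne
      exact ih (s1 ⊔ d) d (by omega) hz'S le_sup_right hdS

end Main

theorem statement9 (I : Set ℕ) (hI : I.Nonempty) (S : AddSubmonoid (↥I →₀ ℕ)) :
    IsGapAbsorbing S ↔
      (IsIdealExtension S ∧
        ∀ a ∈ Atoms S, ∀ b ∈ Atoms S, ∀ i ∈ (a ⊔ b).support,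
          ∀ c : ↥I →₀ ℕ, c + Finsupp.single i 1 = a + b → minLen S c ≤ 2) := by
  constructor
  · intro hGA
    refine ⟨idealExt_of_GA S hGA, ?_⟩
    intro a ha b hb i hi c hc
    rw [Finsupp.mem_support_iff] at hi
    by_cases hai : a i ≠ 0
    · exact F2aux S hGA ha hb hai c hc
    · push_neg at hai
      have hbi : b i ≠ 0 := by
        intro hbi
        apply hi
        have h1 : (a ⊔ b) i = a i ⊔ b i := Finsupp.sup_apply _ _ _
        rw [h1, hai, hbi]
        rfl
      exact F2aux S hGA hb ha hbi c (by rw [hc, add_comm])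
  · rintro ⟨hIE, hstar⟩
    constructor
    · intro x hx
      rw [Set.mem_add] at hx
      obtain ⟨h1, hh1, h2, hh2, h12⟩ := hx
      replace h12 : h1 + h2 = x := h12
      by_cases hS : x ∈ S
      · have h1ne : h1 ≠ 0 := fun he => hh1 (by rw [he]; exact S.zero_mem)
        have hxS : x ∈ Sstar S := ⟨hS, by rw [← h12]; exact addF_ne_zero h2 h1ne⟩
        obtain ⟨b1, hb1A, hb1le⟩ := above S hIE (degF x) x h1 le_rfl hxS
          (h12 ▸ le_self_add) (fun hc => hh1 hc.1)
        obtain ⟨b2, hb2A, hb2le⟩ := above S hIE (degF x) x h2 le_rfl hxS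
          (h12 ▸ le_add_self) (fun hc => hh2 hc.1)
        have hxle : x ≤ b1 + b2 := h12 ▸ add_le_add hb1le hb2le
        have hP : b1 + b2 ∈ Atoms S ∪ (Atoms S + Atoms S) :=
          Or.inr (Set.add_mem_add hb1A hb2A)
        have hfin := stripStar S hIE hstar (degF (b1 + b2)) (b1 + b2) x le_rfl hP hxS hxle
        rcases hfin with h | h
        · exact Or.inl (Or.inr h)
        · exact Or.inr h
      · exact Or.inl (Or.inl hS)
    · intro x hx
      rw [Set.mem_add] at hx
      obtain ⟨h, hh, a, ha, hha⟩ := hx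
      replace hha : h + a = x := hha
      have hxS : x ∈ Sstar S := by
        have h1 := hIE a (Atoms_subset S ha) h
        rw [← hha, add_comm]
        exact h1
      obtain ⟨b, hbA, hble⟩ := above S hIE (degF x) x h le_rfl hxS
        (hha ▸ le_self_add) (fun hc => hh hc.1)
      have hxle : x ≤ b + a := hha ▸ add_le_add hble le_rfl
      exact stripStar S hIE hstar (degF (b + a)) (b + a) x le_rfl
        (Or.inr (Set.add_mem_add hbA ha)) hxS hxle
end

section
/- Let I be a nonempty set of non-negative integers, let S be a submonoid of ℕ^(I), and let s ∈ S. If ℓ(s) = 2 and s has at least two distinct factorizations into atoms, then s is a Betti element of S. -/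
open Pointwise

section Factorizations

variable {M : Type*} [AddCommMonoid M] [PartialOrder M]

/-- The element represented by a factorization, i.e. a finitely supported
function from the atoms to `ℕ`. -/
noncomputable def factSum (S : AddSubmonoid M) (z : ↥(Atoms S) →₀ ℕ) : M :=
  z.sum fun a n => n • (a : M)

/-- The set of factorizations of `s` into atoms of `S`. -/
noncomputable def Zset (S : AddSubmonoid M) (s : M) : Set (↥(Atoms S) →₀ ℕ) :=
  {z | factSum S z = s}

end Factorizations

section Betti

variable {M : Type*} [AddCommMonoid M] [PartialOrder M]

/-- The graph `G_s`: vertices are atoms `a` with `a ≤_S s`, and `a`, `b` are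
adjacent whenever `s - a - b ∈ S`. -/
def BettiGraph (S : AddSubmonoid M) (s : M) :
    SimpleGraph {a : M // a ∈ Atoms S ∧ dvdS S a s} where
  Adj a b := a ≠ b ∧ ∃ t ∈ S, (a : M) + (b : M) + t = s
  symm := by
    constructor
    rintro a b ⟨hne, t, htS, ht⟩
    refine ⟨hne.symm, t, htS, ?_⟩
    rw [add_comm (b : M) (a : M)]
    exact ht
  loopless := by
    constructor
    rintro a ⟨hne, -⟩
    exact hne rfl

/-- `s` is a Betti element of `S` if the graph `G_s` is not connected. -/
def IsBetti (S : AddSubmonoid M) (s : M) : Prop := ¬ (BettiGraph S s).Connected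

section Aux

variable {ι : Type*} {S : AddSubmonoid (ι →₀ ℕ)}

lemma finsuppAddLeftCancel {a x y : ι →₀ ℕ} (h : a + x = a + y) : x = y := by
  ext i
  have := DFunLike.congr_fun h i
  simp [Finsupp.add_apply] at this
  omega

lemma finsuppAddEqZero {x y : ι →₀ ℕ} (h : x + y = 0) : x = 0 := by
  ext i
  have := DFunLike.congr_fun h i
  simp [Finsupp.add_apply] at this
  exact this.1

lemma factSum_add (x y : ↥(Atoms S) →₀ ℕ) :
    factSum S (x + y) = factSum S x + factSum S y := by
  classical
  exact Finsupp.sum_add_index (by simp) (fun a _ m n => add_smul m n (a : ι →₀ ℕ))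

lemma factSum_single (c : ↥(Atoms S)) (n : ℕ) :
    factSum S (Finsupp.single c n) = n • (c : ι →₀ ℕ) := by
  classical
  exact Finsupp.sum_single_index (by simp)

lemma factSum_zero : factSum S (0 : ↥(Atoms S) →₀ ℕ) = 0 := by
  classical
  exact Finsupp.sum_zero_index

lemma factSum_mem (u : ↥(Atoms S) →₀ ℕ) : factSum S u ∈ S := by
  classical
  refine AddSubmonoid.sum_mem S fun c _ => ?_
  exact AddSubmonoid.nsmul_mem S c.2.1.1 _

lemma factSum_decomp (u : ↥(Atoms S) →₀ ℕ) {c : ↥(Atoms S)} (hc : c ∈ u.support) :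
    ∃ u', u = Finsupp.single c 1 + u' := by
  classical
  refine ⟨Finsupp.single c (u c - 1) + u.erase c, ?_⟩
  have h1 : u c ≠ 0 := Finsupp.mem_support_iff.mp hc
  rw [← add_assoc, ← Finsupp.single_add]
  have h2 : 1 + (u c - 1) = u c := by omega
  rw [h2, Finsupp.single_add_erase]

lemma factSum_ne_zero {u : ↥(Atoms S) →₀ ℕ} (hu : u ≠ 0) : factSum S u ≠ 0 := by
  classical
  obtain ⟨c, hc⟩ := Finsupp.support_nonempty_iff.mpr hu
  obtain ⟨u', rfl⟩ := factSum_decomp u hc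
  rw [factSum_add, factSum_single, one_smul]
  have hcne : (c : ι →₀ ℕ) ≠ 0 := fun h => c.2.1.2 (Set.mem_singleton_iff.mpr h)
  obtain ⟨i, hi⟩ : ∃ i, (c : ι →₀ ℕ) i ≠ 0 := by
    by_contra h
    push_neg at h
    exact hcne (Finsupp.ext h)
  intro h0
  have := DFunLike.congr_fun h0 i
  simp [Finsupp.add_apply] at this
  exact hi this.1

lemma factSum_eq_zero {u : ↥(Atoms S) →₀ ℕ} (hu : factSum S u = 0) : u = 0 := by
  by_contra h
  exact factSum_ne_zero h hu

/-- An atom has a unique factorization. -/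
lemma atom_fact_unique {b : ι →₀ ℕ} (hb : b ∈ Atoms S) (u : ↥(Atoms S) →₀ ℕ)
    (hu : factSum S u = b) : u = Finsupp.single ⟨b, hb⟩ 1 := by
  classical
  have hune : u ≠ 0 := by
    rintro rfl
    rw [factSum_zero] at hu
    exact hb.1.2 (Set.mem_singleton_iff.mpr hu.symm)
  obtain ⟨c, hc⟩ := Finsupp.support_nonempty_iff.mpr hune
  obtain ⟨u', rfl⟩ := factSum_decomp u hc
  rw [factSum_add, factSum_single, one_smul] at hu
  have hu'0 : factSum S u' = 0 := by
    by_contra h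
    refine hb.2 ⟨(c : ι →₀ ℕ), c.2.1, factSum S u', ⟨factSum_mem u', ?_⟩, hu⟩
    exact fun h0 => h (Set.mem_singleton_iff.mp h0)
  rw [factSum_eq_zero hu'0, add_zero]
  rw [hu'0, add_zero] at hu
  have hcb : c = (⟨b, hb⟩ : ↥(Atoms S)) := Subtype.ext hu
  rw [hcb]

end Aux

theorem statement10 (I : Set ℕ) (hI : I.Nonempty) (S : AddSubmonoid (↥I →₀ ℕ))
    (s : ↥I →₀ ℕ) (hs : s ∈ S) (hl : minLen S s = 2)
    (hZ : ∃ z ∈ Zset S s, ∃ w ∈ Zset S s, z ≠ w) :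
    IsBetti S s := by
  classical
  -- extract a length-2 factorization s = a + b
  have hne : (Lset S s).Nonempty := by
    by_contra h
    rw [Set.not_nonempty_iff_eq_empty] at h
    rw [minLen, h, Nat.sInf_empty] at hl
    exact two_ne_zero hl.symm
  have h2 : (2 : ℕ) ∈ Lset S s := hl ▸ Nat.sInf_mem hne
  have h2' : s ∈ ({(0 : ↥I →₀ ℕ)} + Atoms S) + Atoms S := h2
  obtain ⟨x, hx, b, hb, hxb⟩ := Set.mem_add.mp h2'
  obtain ⟨z0, hz0, a, ha, hza⟩ := Set.mem_add.mp hx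
  rw [Set.mem_singleton_iff] at hz0
  have hsab : a + b = s := by rw [← hxb, ← hza, hz0, zero_add]
  have hsne : s ≠ 0 := by
    intro h
    rw [h] at hsab
    exact ha.1.2 (Set.mem_singleton_iff.mpr (finsuppAddEqZero hsab))
  intro hconn
  have hbS : b ∈ S := hb.1.1
  have haS : a ∈ S := ha.1.1
  have hva : a ∈ Atoms S ∧ dvdS S a s := ⟨ha, b, hbS, hsab⟩
  have hvb : b ∈ Atoms S ∧ dvdS S b s :=
    ⟨hb, a, haS, by rw [add_comm]; exact hsab⟩
  let va : {v : ↥I →₀ ℕ // v ∈ Atoms S ∧ dvdS S v s} := ⟨a, hva⟩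
  -- adjacency preserves being in {a, b}
  have hclosed : ∀ v w : {v : ↥I →₀ ℕ // v ∈ Atoms S ∧ dvdS S v s},
      (BettiGraph S s).Adj v w →
      ((v : ↥I →₀ ℕ) = a ∨ (v : ↥I →₀ ℕ) = b) →
      ((w : ↥I →₀ ℕ) = a ∨ (w : ↥I →₀ ℕ) = b) := by
    rintro v w ⟨-, t, htS, ht⟩ hv
    rcases hv with hv | hv
    · rw [hv] at ht
      have hwt : (w : ↥I →₀ ℕ) + t = b := by
        apply finsuppAddLeftCancel (a := a)
        rw [← add_assoc, ht]
        exact hsab.symm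
      by_cases ht0 : t = 0
      · right; rw [ht0, add_zero] at hwt; exact hwt
      · refine absurd ?_ hb.2
        refine ⟨(w : ↥I →₀ ℕ), w.2.1.1, t, ⟨htS, ?_⟩, hwt⟩
        exact fun h0 => ht0 (Set.mem_singleton_iff.mp h0)
    · rw [hv] at ht
      have hwt : (w : ↥I →₀ ℕ) + t = a := by
        apply finsuppAddLeftCancel (a := b)
        rw [← add_assoc, ht, ← hsab]
        exact add_comm a b
      by_cases ht0 : t = 0
      · left; rw [ht0, add_zero] at hwt; exact hwt
      · refine absurd ?_ ha.2
        refine ⟨(w : ↥I →₀ ℕ), w.2.1.1, t, ⟨htS, ?_⟩, hwt⟩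
        exact fun h0 => ht0 (Set.mem_singleton_iff.mp h0)
  -- every vertex is a or b
  have hall : ∀ v : {v : ↥I →₀ ℕ // v ∈ Atoms S ∧ dvdS S v s},
      (v : ↥I →₀ ℕ) = a ∨ (v : ↥I →₀ ℕ) = b := by
    have H : ∀ (u v : {v : ↥I →₀ ℕ // v ∈ Atoms S ∧ dvdS S v s})
        (_ : (BettiGraph S s).Walk u v),
        ((u : ↥I →₀ ℕ) = a ∨ (u : ↥I →₀ ℕ) = b) →
        ((v : ↥I →₀ ℕ) = a ∨ (v : ↥I →₀ ℕ) = b) := by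
      intro u v p
      induction p with
      | nil => exact id
      | cons h q ih => exact fun hu => ih (hclosed _ _ h hu)
    intro v
    obtain ⟨p⟩ := hconn.preconnected va v
    exact H va v p (Or.inl rfl)
  -- every factorization of s is single a 1 + single b 1
  have huniq : ∀ u ∈ Zset S s,
      u = Finsupp.single (⟨a, ha⟩ : ↥(Atoms S)) 1 + Finsupp.single ⟨b, hb⟩ 1 := by
    intro u hu
    have hufs : factSum S u = s := hu
    have hune : u ≠ 0 := by
      rintro rfl
      rw [factSum_zero] at hufs
      exact hsne hufs.symm
    obtain ⟨c, hc⟩ := Finsupp.support_nonempty_iff.mpr hune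
    obtain ⟨u', rfl⟩ := factSum_decomp _ hc
    rw [factSum_add, factSum_single, one_smul] at hufs
    have hcv := hall ⟨(c : ↥I →₀ ℕ), c.2, factSum S u', factSum_mem u', hufs⟩
    rcases hcv with hcv | hcv
    · have hcv' : (c : ↥I →₀ ℕ) = a := hcv
      have hb' : factSum S u' = b := by
        apply finsuppAddLeftCancel (a := a)
        rw [hsab, ← hufs, hcv']
      have hca : c = (⟨a, ha⟩ : ↥(Atoms S)) := Subtype.ext hcv'
      rw [hca, atom_fact_unique hb u' hb']
    · have hcv' : (c : ↥I →₀ ℕ) = b := hcv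
      have ha' : factSum S u' = a := by
        apply finsuppAddLeftCancel (a := b)
        rw [add_comm b a, hsab, ← hufs, hcv']
      have hcb : c = (⟨b, hb⟩ : ↥(Atoms S)) := Subtype.ext hcv'
      rw [hcb, atom_fact_unique ha u' ha', add_comm]
  obtain ⟨z, hz, w, hw, hzw⟩ := hZ
  exact hzw ((huniq z hz).trans (huniq w hw).symm)
end Betti
end

section
/- Let I be a nonempty set of non-negative integers, let S be an ideal extension of ℕ^(I), let L = {i ∈ I : e_i ∈ S}, and let s ∈ C(S) = {x ∈ S : Supp(x) ⊆ I \ L} with ℓ(s) ≥ 3. Then s has a unique factorization into atoms if and only if s = 7e_i for some i ∈ I \ L with 2e_i ∈ C(S). -/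
open Pointwise

namespace St12

variable {I : Set ℕ}

open Finsupp


variable {I : Set ℕ}

/-- total degree -/
def deg (x : ↥I →₀ ℕ) : ℕ := x.sum fun _ n => n

lemma deg_add (x y : ↥I →₀ ℕ) : deg (x + y) = deg x + deg y :=
  Finsupp.sum_add_index' (fun _ => rfl) (fun _ _ _ => rfl)

@[simp] lemma deg_zero : deg (0 : ↥I →₀ ℕ) = 0 := Finsupp.sum_zero_index

@[simp] lemma deg_single (i : ↥I) (n : ℕ) : deg (Finsupp.single i n) = n :=
  Finsupp.sum_single_index rfl

lemma apply_le_deg (x : ↥I →₀ ℕ) (a : ↥I) : x a ≤ deg x := by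
  by_cases h : a ∈ x.support
  · exact Finset.single_le_sum (fun _ _ => Nat.zero_le _) h
  · simp [Finsupp.notMem_support_iff.mp h]

lemma deg_eq_zero_iff (x : ↥I →₀ ℕ) : deg x = 0 ↔ x = 0 := by
  constructor
  · intro h; ext a; exact Nat.le_zero.mp (h ▸ apply_le_deg x a)
  · rintro rfl; simp

lemma deg_mono {x y : ↥I →₀ ℕ} (h : x ≤ y) : deg x ≤ deg y := by
  obtain ⟨c, rfl⟩ := exists_add_of_le h
  simp [deg_add]

lemma deg_eq_sum_over (x : ↥I →₀ ℕ) (A : Finset ↥I) (hA : x.support ⊆ A) :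
    deg x = ∑ a ∈ A, x a :=
  Finset.sum_subset hA (fun a _ ha => Finsupp.notMem_support_iff.mp ha)

lemma pair_le_deg (x : ↥I →₀ ℕ) {i j : ↥I} (h : i ≠ j) : x i + x j ≤ deg x := by
  have h1 : deg x = ∑ a ∈ x.support ∪ {i, j}, x a :=
    deg_eq_sum_over x _ Finset.subset_union_left
  have h2 : ∑ a ∈ ({i, j} : Finset ↥I), x a ≤ ∑ a ∈ x.support ∪ {i, j}, x a :=
    Finset.sum_le_sum_of_subset Finset.subset_union_right
  rw [Finset.sum_pair h] at h2
  omega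

lemma triple_le_deg (x : ↥I →₀ ℕ) {i j k : ↥I} (hij : i ≠ j) (hik : i ≠ k) (hjk : j ≠ k) :
    x i + x j + x k ≤ deg x := by
  have h1 : deg x = ∑ a ∈ x.support ∪ {i, j, k}, x a :=
    deg_eq_sum_over x _ Finset.subset_union_left
  have h2 : ∑ a ∈ ({i, j, k} : Finset ↥I), x a ≤ ∑ a ∈ x.support ∪ {i, j, k}, x a :=
    Finset.sum_le_sum_of_subset Finset.subset_union_right
  have h3 : ∑ a ∈ ({i, j, k} : Finset ↥I), x a = x i + x j + x k := by
    rw [Finset.sum_insert (by simp [hij, hik]), Finset.sum_pair hjk, add_assoc]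
  omega

lemma eq_single_of_le_single {u : ↥I →₀ ℕ} {i : ↥I} {n : ℕ}
    (h : u ≤ Finsupp.single i n) : u = Finsupp.single i (u i) ∧ u i ≤ n := by
  have hle : ∀ a, u a ≤ Finsupp.single i n a := fun a => (Finsupp.le_def.mp h) a
  constructor
  · ext a
    by_cases ha : a = i
    · subst ha; simp
    · have := hle a
      simp only [Finsupp.single_apply] at this ⊢
      rw [if_neg (by exact fun hc => ha hc.symm)] at this ⊢
      omega
  · simpa using hle i

lemma eq_pair_of_le_pair {u : ↥I →₀ ℕ} {i t : ↥I} {p q : ℕ} (hit : i ≠ t)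
    (h : u ≤ Finsupp.single i p + Finsupp.single t q) :
    u = Finsupp.single i (u i) + Finsupp.single t (u t) ∧ u i ≤ p ∧ u t ≤ q := by
  have hle : ∀ a, u a ≤ (Finsupp.single i p + Finsupp.single t q) a :=
    fun a => (Finsupp.le_def.mp h) a
  have hti : t ≠ i := fun hc => hit hc.symm
  refine ⟨?_, ?_, ?_⟩
  · ext a
    simp only [Finsupp.add_apply, Finsupp.single_apply]
    by_cases hai : a = i
    · subst hai; rw [if_pos rfl, if_neg hti]; omega
    · by_cases hat : a = t
      · subst hat; rw [if_pos rfl, if_neg hit]; omega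
      · have := hle a
        simp only [Finsupp.add_apply, Finsupp.single_apply] at this
        rw [if_neg (fun hc => hai hc.symm), if_neg (fun hc => hat hc.symm)] at this ⊢
        omega
  · have := hle i
    rw [Finsupp.add_apply, Finsupp.single_eq_same, Finsupp.single_apply, if_neg hti,
      add_zero] at this
    exact this
  · have := hle t
    rw [Finsupp.add_apply, Finsupp.single_eq_same, Finsupp.single_apply, if_neg hit,
      zero_add] at this
    exact this


lemma mem_sstar {S : AddSubmonoid (↥I →₀ ℕ)} {x : ↥I →₀ ℕ} :
    x ∈ Sstar S ↔ x ∈ S ∧ x ≠ 0 := by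
  simp [Sstar, Set.mem_diff]

lemma sstar_up {S : AddSubmonoid (↥I →₀ ℕ)} (hS : IsIdealExtension S)
    {x y : ↥I →₀ ℕ} (hx : x ∈ Sstar S) (h : x ≤ y) : y ∈ Sstar S := by
  obtain ⟨c, rfl⟩ := exists_add_of_le h
  exact hS x hx c

lemma atom_mem_sstar {S : AddSubmonoid (↥I →₀ ℕ)} {x : ↥I →₀ ℕ}
    (h : x ∈ Atoms S) : x ∈ Sstar S := h.1

lemma atoms_iff {S : AddSubmonoid (↥I →₀ ℕ)} {x : ↥I →₀ ℕ} :
    x ∈ Atoms S ↔ x ∈ Sstar S ∧ ∀ u v, u ∈ Sstar S → v ∈ Sstar S → u + v ≠ x := by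
  constructor
  · rintro ⟨h1, h2⟩
    refine ⟨h1, fun u v hu hv he => h2 ?_⟩
    exact Set.mem_add.mpr ⟨u, hu, v, hv, he⟩
  · rintro ⟨h1, h2⟩
    refine ⟨h1, fun hc => ?_⟩
    obtain ⟨u, hu, v, hv, he⟩ := Set.mem_add.mp hc
    exact h2 u v hu hv he

lemma is_atom_of_no_split {S : AddSubmonoid (↥I →₀ ℕ)} {x : ↥I →₀ ℕ}
    (hx : x ∈ Sstar S)
    (h : ∀ u v, u + v = x → u ∈ S → v ∈ S → u = 0 ∨ v = 0) : x ∈ Atoms S := by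
  refine atoms_iff.mpr ⟨hx, fun u v hu hv he => ?_⟩
  rcases h u v he (mem_sstar.mp hu).1 (mem_sstar.mp hv).1 with h0 | h0
  · exact (mem_sstar.mp hu).2 h0
  · exact (mem_sstar.mp hv).2 h0

/-- factorization as a multiset of atoms -/
def IsFact (S : AddSubmonoid (↥I →₀ ℕ)) (w : ↥I →₀ ℕ) (F : Multiset (↥I →₀ ℕ)) : Prop :=
  (∀ x ∈ F, x ∈ Atoms S) ∧ F.sum = w

lemma fact_add {S : AddSubmonoid (↥I →₀ ℕ)} {w w' : ↥I →₀ ℕ} {F G : Multiset (↥I →₀ ℕ)}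
    (hF : IsFact S w F) (hG : IsFact S w' G) : IsFact S (w + w') (F + G) := by
  refine ⟨fun x hx => ?_, by simp [hF.2, hG.2]⟩
  rcases Multiset.mem_add.mp hx with h | h
  · exact hF.1 x h
  · exact hG.1 x h

lemma mem_le_sum {F : Multiset (↑I →₀ ℕ)} {x : ↑I →₀ ℕ} (h : x ∈ F) : x ≤ F.sum := by
  obtain ⟨R, rfl⟩ : ∃ R, F = x ::ₘ R := ⟨F.erase x, (Multiset.cons_erase h).symm⟩
  simp [Multiset.sum_cons, le_self_add]

lemma sum_le_sum_of_le {F G : Multiset (↑I →₀ ℕ)} (h : F ≤ G) : F.sum ≤ G.sum := by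
  obtain ⟨R, rfl⟩ := Multiset.le_iff_exists_add.mp h
  simp [le_self_add]

lemma exists_fact_aux (S : AddSubmonoid (↥I →₀ ℕ)) :
    ∀ n (x : ↥I →₀ ℕ), deg x = n → x ∈ Sstar S → ∃ F, IsFact S x F := by
  intro n
  induction n using Nat.strong_induction_on with
  | _ n ih =>
    intro x hdeg hx
    by_cases ha : x ∈ Atoms S
    · refine ⟨{x}, fun y hy => ?_, by simp⟩
      rwa [Multiset.mem_singleton.mp hy]
    · have hsplit : x ∈ Sstar S + Sstar S := by
        by_contra hc; exact ha ⟨hx, hc⟩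
      obtain ⟨u, hu, v, hv, he⟩ := Set.mem_add.mp hsplit
      have hu0 : deg u ≠ 0 := fun h => (mem_sstar.mp hu).2 ((deg_eq_zero_iff u).mp h)
      have hv0 : deg v ≠ 0 := fun h => (mem_sstar.mp hv).2 ((deg_eq_zero_iff v).mp h)
      have hd : deg u + deg v = n := by rw [← deg_add, he, hdeg]
      obtain ⟨F, hF⟩ := ih (deg u) (by omega) u rfl hu
      obtain ⟨G, hG⟩ := ih (deg v) (by omega) v rfl hv
      exact ⟨F + G, by simpa [he] using fact_add hF hG⟩

/-- atomicity -/
lemma exists_fact {S : AddSubmonoid (↥I →₀ ℕ)} {x : ↥I →₀ ℕ}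
    (hx : x ∈ Sstar S) : ∃ F, IsFact S x F :=
  exists_fact_aux S (deg x) x rfl hx

lemma factSum_add {S : AddSubmonoid (↥I →₀ ℕ)} (z1 z2 : ↥(Atoms S) →₀ ℕ) :
    factSum S (z1 + z2) = factSum S z1 + factSum S z2 :=
  Finsupp.sum_add_index' (fun _ => zero_smul _ _) (fun a m n => add_smul m n _)

noncomputable def toM (S : AddSubmonoid (↥I →₀ ℕ)) (z : ↥(Atoms S) →₀ ℕ) :
    Multiset (↥I →₀ ℕ) := (Finsupp.toMultiset z).map Subtype.val

lemma toM_add {S : AddSubmonoid (↥I →₀ ℕ)} (z1 z2 : ↥(Atoms S) →₀ ℕ) :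
    toM S (z1 + z2) = toM S z1 + toM S z2 := by
  simp [toM, Finsupp.toMultiset_add]

lemma toM_sum {S : AddSubmonoid (↥I →₀ ℕ)} (z : ↥(Atoms S) →₀ ℕ) :
    (toM S z).sum = factSum S z := by
  induction z using Finsupp.induction with
  | zero => simp [toM, factSum]
  | single_add a n f _ _ ih =>
    rw [toM_add, Multiset.sum_add, ih, factSum_add]
    congr 1
    have h1 : factSum S (Finsupp.single a n) = n • (a : ↥I →₀ ℕ) :=
      Finsupp.sum_single_index (zero_smul _ _)
    rw [h1]
    simp [toM, Finsupp.toMultiset_single, Multiset.nsmul_singleton]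

lemma toM_mem {S : AddSubmonoid (↥I →₀ ℕ)} {z : ↥(Atoms S) →₀ ℕ} {x : ↥I →₀ ℕ}
    (h : x ∈ toM S z) : x ∈ Atoms S := by
  obtain ⟨a, _, rfl⟩ := Multiset.mem_map.mp h
  exact a.property

lemma toM_inj {S : AddSubmonoid (↥I →₀ ℕ)} : Function.Injective (toM S) := by
  intro z1 z2 h
  classical
  have := Multiset.map_injective (f := (Subtype.val : ↥(Atoms S) → ↥I →₀ ℕ))
    Subtype.val_injective h
  have h2 := congrArg Multiset.toFinsupp this
  rwa [Finsupp.toMultiset_toFinsupp, Finsupp.toMultiset_toFinsupp] at h2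

lemma toM_surj {S : AddSubmonoid (↥I →₀ ℕ)} {F : Multiset (↥I →₀ ℕ)}
    (h : ∀ x ∈ F, x ∈ Atoms S) : ∃ z, toM S z = F := by
  classical
  refine ⟨Multiset.toFinsupp (F.attach.map fun x => (⟨x.1, h x.1 x.2⟩ : ↥(Atoms S))), ?_⟩
  rw [toM, Multiset.toFinsupp_toMultiset, Multiset.map_map]
  exact Multiset.attach_map_val F

lemma isFact_toM {S : AddSubmonoid (↥I →₀ ℕ)} {s : ↥I →₀ ℕ} {z : ↥(Atoms S) →₀ ℕ}
    (h : z ∈ Zset S s) : IsFact S s (toM S z) :=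
  ⟨fun _ hx => toM_mem hx, by rw [toM_sum]; exact h⟩

lemma uniq_facts {S : AddSubmonoid (↥I →₀ ℕ)} {s : ↥I →₀ ℕ}
    (h : ∃! z, z ∈ Zset S s) :
    ∀ F G, IsFact S s F → IsFact S s G → F = G := by
  intro F G hF hG
  obtain ⟨zF, hzF⟩ := toM_surj hF.1
  obtain ⟨zG, hzG⟩ := toM_surj hG.1
  have h1 : zF ∈ Zset S s := by
    show factSum S zF = s
    rw [← toM_sum, hzF]; exact hF.2
  have h2 : zG ∈ Zset S s := by
    show factSum S zG = s
    rw [← toM_sum, hzG]; exact hG.2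
  obtain ⟨z0, _, huz⟩ := h
  rw [← hzF, ← hzG, huz zF h1, huz zG h2]

lemma fact_mem_nfold {S : AddSubmonoid (↥I →₀ ℕ)} :
    ∀ {F : Multiset (↥I →₀ ℕ)} {w : ↥I →₀ ℕ}, IsFact S w F →
      w ∈ nfold (Multiset.card F) (Atoms S) := by
  intro F
  induction F using Multiset.induction with
  | empty => intro w h; simp only [Multiset.sum_zero, IsFact] at h
             simp [← h.2, nfold]
  | cons a F ih =>
    intro w h
    have hsum : w = F.sum + a := by rw [← h.2, Multiset.sum_cons, add_comm]
    have hF : IsFact S F.sum F := ⟨fun x hx => h.1 x (Multiset.mem_cons_of_mem hx), rfl⟩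
    rw [Multiset.card_cons]
    exact Set.mem_add.mpr ⟨F.sum, ih hF, a, h.1 a (Multiset.mem_cons_self a F), hsum.symm⟩

lemma exists_coord_mem {F : Multiset (↥I →₀ ℕ)} {a : ↥I} (h : 1 ≤ F.sum a) :
    ∃ b ∈ F, 1 ≤ b a := by
  induction F using Multiset.induction with
  | empty => simp at h
  | cons x F ih =>
    rw [Multiset.sum_cons, Finsupp.add_apply] at h
    rcases Nat.lt_or_ge (x a) 1 with h1 | h1
    · obtain ⟨b, hb, hb1⟩ := ih (by omega)
      exact ⟨b, Multiset.mem_cons_of_mem hb, hb1⟩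
    · exact ⟨x, Multiset.mem_cons_self x F, h1⟩

lemma exists_min_deg {Z : Multiset (↥I →₀ ℕ)} (h : Z ≠ 0) :
    ∃ a ∈ Z, ∀ x ∈ Z, deg a ≤ deg x := by
  induction Z using Multiset.induction with
  | empty => exact absurd rfl h
  | cons x F ih =>
    rcases eq_or_ne F 0 with rfl | hF
    · exact ⟨x, Multiset.mem_cons_self x 0, by simp⟩
    · obtain ⟨a, ha, hmin⟩ := ih hF
      rcases le_or_gt (deg x) (deg a) with h1 | h1
      · refine ⟨x, Multiset.mem_cons_self x F, fun y hy => ?_⟩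
        rcases Multiset.mem_cons.mp hy with rfl | hy
        · exact le_rfl
        · exact h1.trans (hmin y hy)
      · refine ⟨a, Multiset.mem_cons_of_mem ha, fun y hy => ?_⟩
        rcases Multiset.mem_cons.mp hy with rfl | hy
        · exact h1.le
        · exact hmin y hy

lemma cons_two {Z : Multiset (↥I →₀ ℕ)} {a b : ↥I →₀ ℕ}
    (ha : a ∈ Z) (hb : b ∈ Z) (hab : b ≠ a) : ∃ R, Z = a ::ₘ b ::ₘ R := by
  have hb' : b ∈ Z.erase a := (Multiset.mem_erase_of_ne hab).mpr hb
  exact ⟨(Z.erase a).erase b, by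
    rw [Multiset.cons_erase hb', Multiset.cons_erase ha]⟩

lemma cons_three {Z : Multiset (↥I →₀ ℕ)} {a b c : ↥I →₀ ℕ}
    (ha : a ∈ Z) (hb : b ∈ Z) (hc : c ∈ Z) (hba : b ≠ a) (hca : c ≠ a) (hcb : c ≠ b) :
    ∃ R, Z = a ::ₘ b ::ₘ c ::ₘ R := by
  have hb' : b ∈ Z.erase a := (Multiset.mem_erase_of_ne hba).mpr hb
  have hc' : c ∈ (Z.erase a).erase b :=
    (Multiset.mem_erase_of_ne hcb).mpr ((Multiset.mem_erase_of_ne hca).mpr hc)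
  exact ⟨((Z.erase a).erase b).erase c, by
    rw [Multiset.cons_erase hc', Multiset.cons_erase hb', Multiset.cons_erase ha]⟩

variable {S : AddSubmonoid (↥I →₀ ℕ)} {s : ↥I →₀ ℕ} {Z : Multiset (↥I →₀ ℕ)}

lemma exists_compl (hS : IsIdealExtension S) (hZ : IsFact S s Z)
    {x b v : ↥I →₀ ℕ} (hx : x ∈ Z) (hb : b ∈ Z.erase x) (hv : v ≤ b)
    (hne : (Z.erase x).erase b ≠ 0) :
    ∃ w', w' ∈ Sstar S ∧ (x + v) + w' = s := by
  obtain ⟨c, hc⟩ := Multiset.exists_mem_of_ne_zero hne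
  set T := ((Z.erase x).erase b).sum with hT
  refine ⟨(b - v) + T, ?_, ?_⟩
  · have hcZ : c ∈ Z := Multiset.mem_of_mem_erase (Multiset.mem_of_mem_erase hc)
    have hcS : c ∈ Sstar S := (hZ.1 c hcZ).1
    exact sstar_up hS hcS ((mem_le_sum hc).trans le_add_self)
  · have h1 : v + (b - v) = b := add_tsub_cancel_of_le hv
    have h2 : b + T = (Z.erase x).sum := by
      rw [hT, ← Multiset.sum_cons, Multiset.cons_erase hb]
    have h3 : x + (Z.erase x).sum = s := by
      rw [← Multiset.sum_cons, Multiset.cons_erase hx, hZ.2]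
    have h4 : (x + v) + ((b - v) + T) = x + ((v + (b - v)) + T) := by
      rw [add_assoc, ← add_assoc v (b - v) T]
    rw [h4, h1, h2, h3]

lemma fact_unique_of_add (Huniq : ∀ F G, IsFact S s F → IsFact S s G → F = G)
    {w w' : ↥I →₀ ℕ} (hw' : w' ∈ Sstar S) (h : w + w' = s)
    {F G : Multiset (↥I →₀ ℕ)} (hF : IsFact S w F) (hG : IsFact S w G) : F = G := by
  obtain ⟨H, hH⟩ := exists_fact hw'
  have h1 : IsFact S s (F + H) := by rw [← h]; exact fact_add hF hH
  have h2 : IsFact S s (G + H) := by rw [← h]; exact fact_add hG hH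
  exact add_right_cancel (Huniq _ _ h1 h2)

lemma fact_le_Z (Huniq : ∀ F G, IsFact S s F → IsFact S s G → F = G)
    (hZ : IsFact S s Z) {w w' : ↥I →₀ ℕ} (hw' : w' ∈ Sstar S) (h : w + w' = s)
    {F : Multiset (↥I →₀ ℕ)} (hF : IsFact S w F) : F ≤ Z := by
  obtain ⟨H, hH⟩ := exists_fact hw'
  have h1 : IsFact S s (F + H) := by rw [← h]; exact fact_add hF hH
  rw [← Huniq _ _ h1 hZ]
  exact Multiset.le_add_right F H

lemma Z_elem (hZ : IsFact S s Z)
    (hcore : ∀ i ∈ s.support, Finsupp.single i (1 : ℕ) ∉ S)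
    {x : ↥I →₀ ℕ} (hx : x ∈ Z) : x ∈ Atoms S ∧ x ≤ s ∧ 2 ≤ deg x := by
  have hatom : x ∈ Atoms S := hZ.1 x hx
  have hxle : x ≤ s := hZ.2 ▸ mem_le_sum hx
  refine ⟨hatom, hxle, ?_⟩
  have hx0 : x ≠ 0 := (mem_sstar.mp hatom.1).2
  have hd1 : 1 ≤ deg x := by
    rcases Nat.eq_zero_or_pos (deg x) with h | h
    · exact absurd ((deg_eq_zero_iff x).mp h) hx0
    · exact h
  by_contra hc
  have hdeg : deg x = 1 := by omega
  obtain ⟨m, hm⟩ := Finsupp.support_nonempty_iff.mpr hx0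
  have hm1 : 1 ≤ x m := Nat.one_le_iff_ne_zero.mpr (Finsupp.mem_support_iff.mp hm)
  have hxm : x = Finsupp.single m 1 := by
    ext a
    rcases eq_or_ne a m with rfl | ham
    · have := apply_le_deg x a
      simp only [Finsupp.single_eq_same]
      omega
    · have := pair_le_deg x (show m ≠ a from fun hc' => ham hc'.symm)
      rw [Finsupp.single_apply, if_neg (fun hc' => ham hc'.symm)]
      omega
  have hms : m ∈ s.support := by
    have := (Finsupp.le_def.mp hxle) m
    exact Finsupp.mem_support_iff.mpr (by omega)
  exact hcore m hms (by rw [← hxm]; exact (mem_sstar.mp hatom.1).1)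

lemma mem_Z_of_small (Huniq : ∀ F G, IsFact S s F → IsFact S s G → F = G)
    (hZ : IsFact S s Z)
    (hcore : ∀ i ∈ s.support, Finsupp.single i (1 : ℕ) ∉ S)
    {w w' : ↥I →₀ ℕ} (hw : w ∈ Sstar S) (hw' : w' ∈ Sstar S) (h : w + w' = s)
    (hdeg : deg w ≤ 3) : w ∈ Z := by
  obtain ⟨F, hF⟩ := exists_fact hw
  have hle : F ≤ Z := fact_le_Z Huniq hZ hw' h hF
  have hF0 : F ≠ 0 := by
    rintro rfl
    exact (mem_sstar.mp hw).2 (by rw [← hF.2]; simp)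
  obtain ⟨x, hxF⟩ := Multiset.exists_mem_of_ne_zero hF0
  obtain ⟨F', rfl⟩ : ∃ F', F = x ::ₘ F' := ⟨F.erase x, (Multiset.cons_erase hxF).symm⟩
  rcases eq_or_ne F' 0 with rfl | hF'
  · have : w = x := by rw [← hF.2]; simp
    exact this ▸ Multiset.mem_of_le hle (Multiset.mem_cons_self x 0)
  · exfalso
    obtain ⟨y, hyF⟩ := Multiset.exists_mem_of_ne_zero hF'
    have hxZ : x ∈ Z := Multiset.mem_of_le hle (Multiset.mem_cons_self x F')
    have hyZ : y ∈ Z := Multiset.mem_of_le hle (Multiset.mem_cons_of_mem hyF)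
    have hx2 : 2 ≤ deg x := (Z_elem hZ hcore hxZ).2.2
    have hy2 : 2 ≤ deg y := (Z_elem hZ hcore hyZ).2.2
    have : deg w = deg x + deg (F'.sum) := by rw [← hF.2, Multiset.sum_cons, deg_add]
    have hyle : deg y ≤ deg F'.sum := deg_mono (mem_le_sum hyF)
    omega

lemma pure_split {u v : ↥I →₀ ℕ} {i : ↥I} {n : ℕ} (he : u + v = Finsupp.single i n) :
    u = Finsupp.single i (u i) ∧ v = Finsupp.single i (v i) ∧ u i + v i = n := by
  have hu : u ≤ Finsupp.single i n := he ▸ self_le_add_right u v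
  have hv : v ≤ Finsupp.single i n := he ▸ self_le_add_left v u
  refine ⟨(eq_single_of_le_single hu).1, (eq_single_of_le_single hv).1, ?_⟩
  have := congrArg (fun f : ↥I →₀ ℕ => f i) he
  simpa using this

lemma pair_split {u v : ↥I →₀ ℕ} {i t : ↥I} {p q : ℕ} (hit : i ≠ t)
    (he : u + v = Finsupp.single i p + Finsupp.single t q) :
    u = Finsupp.single i (u i) + Finsupp.single t (u t) ∧
    v = Finsupp.single i (v i) + Finsupp.single t (v t) ∧
    u i + v i = p ∧ u t + v t = q := by
  have hu : u ≤ _ := he ▸ self_le_add_right u v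
  have hv : v ≤ _ := he ▸ self_le_add_left v u
  refine ⟨(eq_pair_of_le_pair hit hu).1, (eq_pair_of_le_pair hit hv).1, ?_, ?_⟩
  · have := congrArg (fun f : ↥I →₀ ℕ => f i) he
    simpa [Finsupp.single_apply, Ne.symm hit] using this
  · have := congrArg (fun f : ↥I →₀ ℕ => f t) he
    simpa [Finsupp.single_apply, hit] using this

lemma pure_sstar (hS : IsIdealExtension S) {i : ↥I}
    (h2 : Finsupp.single i (2 : ℕ) ∈ S) {k : ℕ} (hk : 2 ≤ k) :
    Finsupp.single i k ∈ Sstar S := by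
  have hbase : Finsupp.single i (2 : ℕ) ∈ Sstar S :=
    mem_sstar.mpr ⟨h2, by simp⟩
  have he : Finsupp.single i (2 : ℕ) + Finsupp.single i (k - 2) = Finsupp.single i k := by
    rw [← Finsupp.single_add]; congr 1; omega
  exact he ▸ hS _ hbase _

lemma atom_two (h1 : Finsupp.single i (1 : ℕ) ∉ S)
    (h2 : Finsupp.single i (2 : ℕ) ∈ S) : Finsupp.single i (2 : ℕ) ∈ Atoms S := by
  refine is_atom_of_no_split (mem_sstar.mpr ⟨h2, by simp⟩) ?_
  intro u v he hu hv
  obtain ⟨hu1, hv1, hsum⟩ := pure_split he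
  have : u i = 0 ∨ u i = 1 ∨ u i = 2 := by omega
  rcases this with h | h | h
  · left; rw [hu1, h, Finsupp.single_zero]
  · exfalso; rw [h] at hu1; rw [hu1] at hu; exact h1 hu
  · right; rw [hv1, show v i = 0 by omega, Finsupp.single_zero]

lemma atom_three (hS : IsIdealExtension S) {i : ↥I} (h1 : Finsupp.single i (1 : ℕ) ∉ S)
    (h2 : Finsupp.single i (2 : ℕ) ∈ S) : Finsupp.single i (3 : ℕ) ∈ Atoms S := by
  refine is_atom_of_no_split (pure_sstar hS h2 (by omega)) ?_
  intro u v he hu hv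
  obtain ⟨hu1, hv1, hsum⟩ := pure_split he
  have : u i = 0 ∨ u i = 1 ∨ u i = 2 ∨ u i = 3 := by omega
  rcases this with h | h | h | h
  · left; rw [hu1, h, Finsupp.single_zero]
  · exfalso; rw [h] at hu1; rw [hu1] at hu; exact h1 hu
  · exfalso; rw [show v i = 1 by omega] at hv1; rw [hv1] at hv; exact h1 hv
  · right; rw [hv1, show v i = 0 by omega, Finsupp.single_zero]

lemma atom_mix11 {i t : ↥I} (hit : i ≠ t) (h1 : Finsupp.single i (1 : ℕ) ∉ S)
    (ht : Finsupp.single t (1 : ℕ) ∉ S)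
    (hg : Finsupp.single i (1 : ℕ) + Finsupp.single t (1 : ℕ) ∈ S) :
    Finsupp.single i (1 : ℕ) + Finsupp.single t (1 : ℕ) ∈ Atoms S := by
  have hg0 : (Finsupp.single i (1 : ℕ) + Finsupp.single t (1 : ℕ)) ≠ 0 := by
    intro h
    have := congrArg (fun f : ↥I →₀ ℕ => f i) h
    simp [Finsupp.single_apply, Ne.symm hit] at this
  refine is_atom_of_no_split (mem_sstar.mpr ⟨hg, hg0⟩) ?_
  intro u v he hu hv
  obtain ⟨hu1, hv1, hsi, hst⟩ := pair_split hit he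
  have hcase : (u i = 0 ∧ u t = 0) ∨ (u i = 1 ∧ u t = 0) ∨ (u i = 0 ∧ u t = 1) ∨
      (u i = 1 ∧ u t = 1) := by omega
  rcases hcase with ⟨h3, h4⟩ | ⟨h3, h4⟩ | ⟨h3, h4⟩ | ⟨h3, h4⟩
  · left; rw [hu1, h3, h4]; simp
  · exfalso; rw [h3, h4] at hu1; simp at hu1; rw [hu1] at hu; exact h1 hu
  · exfalso; rw [h3, h4] at hu1; simp at hu1; rw [hu1] at hu; exact ht hu
  · right; rw [hv1, show v i = 0 by omega, show v t = 0 by omega]; simp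

lemma atom_mix31 {i t : ↥I} (hit : i ≠ t) (h1 : Finsupp.single i (1 : ℕ) ∉ S)
    (ht : Finsupp.single t (1 : ℕ) ∉ S)
    (hmix : Finsupp.single i (1 : ℕ) + Finsupp.single t (1 : ℕ) ∉ S)
    (hc : Finsupp.single i (3 : ℕ) + Finsupp.single t (1 : ℕ) ∈ Sstar S) :
    Finsupp.single i (3 : ℕ) + Finsupp.single t (1 : ℕ) ∈ Atoms S := by
  refine is_atom_of_no_split hc ?_
  intro u v he hu hv
  obtain ⟨hu1, hv1, hsi, hst⟩ := pair_split hit he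
  have hvi : v i = 3 - u i := by omega
  have hvt : v t = 1 - u t := by omega
  have hcase : (u i = 0 ∧ u t = 0) ∨ (u i = 3 ∧ u t = 1) ∨
      (u i = 1 ∧ u t = 0) ∨ (u i = 0 ∧ u t = 1) ∨ (u i = 1 ∧ u t = 1) ∨
      (u i = 2 ∧ u t = 0) ∨ (u i = 2 ∧ u t = 1) ∨ (u i = 3 ∧ u t = 0) := by omega
  rcases hcase with ⟨h3, h4⟩ | ⟨h3, h4⟩ | ⟨h3, h4⟩ | ⟨h3, h4⟩ | ⟨h3, h4⟩ | ⟨h3, h4⟩ |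
    ⟨h3, h4⟩ | ⟨h3, h4⟩
  · left; rw [hu1, h3, h4]; simp
  · right; rw [hv1, show v i = 0 by omega, show v t = 0 by omega]; simp
  · exfalso; rw [h3, h4] at hu1; simp at hu1; rw [hu1] at hu; exact h1 hu
  · exfalso; rw [h3, h4] at hu1; simp at hu1; rw [hu1] at hu; exact ht hu
  · exfalso; rw [h3, h4] at hu1; rw [hu1] at hu; exact hmix hu
  · exfalso; rw [show v i = 1 by omega, show v t = 1 by omega] at hv1
    rw [hv1] at hv; exact hmix hv
  · exfalso; rw [show v i = 1 by omega, show v t = 0 by omega] at hv1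
    simp at hv1; rw [hv1] at hv; exact h1 hv
  · exfalso; rw [show v i = 0 by omega, show v t = 1 by omega] at hv1
    simp at hv1; rw [hv1] at hv; exact ht hv

lemma atom_pure_23 (hS : IsIdealExtension S) {i : ↥I}
    (h1 : Finsupp.single i (1 : ℕ) ∉ S) (h2 : Finsupp.single i (2 : ℕ) ∈ S)
    {k : ℕ} (ha : Finsupp.single i k ∈ Atoms S) : k = 2 ∨ k = 3 := by
  have hk0 : k ≠ 0 := by
    intro h
    exact (mem_sstar.mp ha.1).2 (by rw [h, Finsupp.single_zero])
  have hk1 : k ≠ 1 := by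
    intro h
    exact h1 (by rw [← h]; exact (mem_sstar.mp ha.1).1)
  by_contra hcon
  push_neg at hcon
  have hk4 : 4 ≤ k := by omega
  have hsplit := (atoms_iff.mp ha).2 (Finsupp.single i (2 : ℕ)) (Finsupp.single i (k - 2))
    (mem_sstar.mpr ⟨h2, by simp⟩) (pure_sstar hS h2 (by omega))
  apply hsplit
  rw [← Finsupp.single_add]; congr 1; omega

lemma rep23 {m : ℕ} (hm : 2 ≤ m) : ∃ p q, 2 * p + 3 * q = m := by
  rcases Nat.even_or_odd m with ⟨k, hk⟩ | ⟨k, hk⟩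
  · exact ⟨k, 0, by omega⟩
  · exact ⟨k - 1, 1, by omega⟩

lemma eq_replicate_pair {F : Multiset (↥I →₀ ℕ)} {x y : ↥I →₀ ℕ} (hxy : x ≠ y)
    (h : ∀ z ∈ F, z = x ∨ z = y) :
    F = Multiset.replicate (F.count x) x + Multiset.replicate (F.count y) y := by
  classical
  ext z
  rw [Multiset.count_add, Multiset.count_replicate, Multiset.count_replicate]
  by_cases hzx : z = x
  · subst hzx
    rw [if_pos rfl, if_neg (fun hc => hxy hc.symm), add_zero]
  · by_cases hzy : z = y
    · subst hzy
      rw [if_neg (fun hc : x = z => hzx hc.symm), if_pos rfl, zero_add]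
    · rw [if_neg (fun hc : x = z => hzx hc.symm), if_neg (fun hc : y = z => hzy hc.symm)]
      have hzF : z ∉ F := fun hc => by
        rcases h z hc with h2 | h2
        · exact hzx h2
        · exact hzy h2
      simp [Multiset.count_eq_zero.mpr hzF]

lemma ne_add_single {g : ↥I →₀ ℕ} {t : ↥I} : g + Finsupp.single t 1 ≠ g := by
  intro h
  have := congrArg deg h
  rw [deg_add, deg_single] at this
  omega

lemma step_add_single (hS : IsIdealExtension S) (hZ : IsFact S s Z)
    (hcore : ∀ i ∈ s.support, Finsupp.single i (1 : ℕ) ∉ S)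
    (Huniq : ∀ F G, IsFact S s F → IsFact S s G → F = G)
    (hcard : 3 ≤ Multiset.card Z)
    {g : ↥I →₀ ℕ} (hg : g ∈ Z) (hdeg : deg g ≤ 2) {t : ↥I}
    (ht : ∃ b ∈ Z.erase g, 1 ≤ b t) :
    g + Finsupp.single t 1 ∈ Z := by
  obtain ⟨b, hb, hbt⟩ := ht
  have hv : Finsupp.single t 1 ≤ b := Finsupp.single_le_iff.mpr hbt
  have hne : (Z.erase g).erase b ≠ 0 := by
    intro h0
    have h1 := congrArg Multiset.card h0
    rw [Multiset.card_erase_of_mem hb, Multiset.card_erase_of_mem hg] at h1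
    simp only [Multiset.card_zero, Nat.pred_eq_sub_one] at h1
    omega
  obtain ⟨w', hw', hsum⟩ := exists_compl hS hZ hg hb hv hne
  have hmem : g + Finsupp.single t 1 ∈ Sstar S :=
    sstar_up hS (hZ.1 g hg).1 le_self_add
  exact mem_Z_of_small Huniq hZ hcore hmem hw' hsum
    (by rw [deg_add, deg_single]; omega)

lemma mixed_kill (hS : IsIdealExtension S) (hZ : IsFact S s Z)
    (hcore : ∀ i ∈ s.support, Finsupp.single i (1 : ℕ) ∉ S)
    (Huniq : ∀ F G, IsFact S s F → IsFact S s G → F = G)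
    (hcard : 3 ≤ Multiset.card Z)
    {g : ↥I →₀ ℕ} (hg : g ∈ Z) {i j : ↥I} (hij : i ≠ j)
    (hgi : 1 ≤ g i) (hgj : 1 ≤ g j) (hdeg : deg g = 2) : False := by
  have hpair := pair_le_deg g hij
  have hgeq : g = Finsupp.single i 1 + Finsupp.single j 1 := by
    ext a
    rw [Finsupp.add_apply, Finsupp.single_apply, Finsupp.single_apply]
    rcases eq_or_ne i a with rfl | hai
    · rw [if_pos rfl, if_neg (fun hc : j = i => hij hc.symm)]
      omega
    · rcases eq_or_ne j a with rfl | haj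
      · rw [if_neg hai, if_pos rfl]
        omega
      · have := triple_le_deg g hij hai haj
        rw [if_neg hai, if_neg haj]
        omega
  -- find t0 and y0
  have hZe : Z.erase g ≠ 0 := by
    intro h0
    have h1 := congrArg Multiset.card h0
    rw [Multiset.card_erase_of_mem hg] at h1
    simp only [Multiset.card_zero, Nat.pred_eq_sub_one] at h1
    omega
  obtain ⟨b, hb⟩ := Multiset.exists_mem_of_ne_zero hZe
  have hb0 : b ≠ 0 := (mem_sstar.mp (hZ.1 b (Multiset.mem_of_mem_erase hb)).1).2
  obtain ⟨t0, ht0⟩ := Finsupp.support_nonempty_iff.mpr hb0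
  have hbt0 : 1 ≤ b t0 := Nat.one_le_iff_ne_zero.mpr (Finsupp.mem_support_iff.mp ht0)
  have hy0 : g + Finsupp.single t0 1 ∈ Z :=
    step_add_single hS hZ hcore Huniq hcard hg hdeg.le ⟨b, hb, hbt0⟩
  have hy0e : g + Finsupp.single t0 1 ∈ Z.erase g :=
    (Multiset.mem_erase_of_ne ne_add_single).mpr hy0
  -- coordinates i and j available in Z.erase g
  have hcoord : ∀ t : ↥I, 1 ≤ g t → ∃ b' ∈ Z.erase g, 1 ≤ b' t := by
    intro t hgt
    apply exists_coord_mem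
    have h1 : g + Finsupp.single t0 1 ≤ (Z.erase g).sum := mem_le_sum hy0e
    have h2 := (Finsupp.le_def.mp h1) t
    rw [Finsupp.add_apply] at h2
    have h3 : g t ≤ (Z.erase g).sum t := le_trans (Nat.le_add_right _ _) h2
    exact le_trans hgt h3
  have hyi : g + Finsupp.single i 1 ∈ Z :=
    step_add_single hS hZ hcore Huniq hcard hg hdeg.le (hcoord i hgi)
  have hyj : g + Finsupp.single j 1 ∈ Z :=
    step_add_single hS hZ hcore Huniq hcard hg hdeg.le (hcoord j hgj)
  have hyij : g + Finsupp.single j 1 ≠ g + Finsupp.single i 1 := by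
    intro h
    have := congrArg (fun f : ↥I →₀ ℕ => f i) h
    simp only [Finsupp.add_apply, Finsupp.single_eq_same, Finsupp.single_apply] at this
    rw [if_neg (fun hc : j = i => hij hc.symm)] at this
    omega
  obtain ⟨R3, hR3⟩ := cons_three hg hyi hyj ne_add_single ne_add_single hyij
  have hs4 : s = g + ((g + Finsupp.single i 1) + ((g + Finsupp.single j 1) + R3.sum)) := by
    rw [← hZ.2, hR3]
    simp [Multiset.sum_cons]
  have hw' : g + R3.sum ∈ Sstar S := sstar_up hS (hZ.1 g hg).1 le_self_add
  have hkey : (g + (g + g)) + (g + R3.sum) = s := by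
    rw [hs4, hgeq]
    abel
  have hF1 : IsFact S (g + (g + g)) {g, g, g} := by
    constructor
    · intro x hx
      have : x = g := by
        rcases Multiset.mem_cons.mp hx with rfl | hx1
        · rfl
        rcases Multiset.mem_cons.mp hx1 with rfl | hx2
        · rfl
        · exact Multiset.mem_singleton.mp hx2
      rw [this]; exact hZ.1 g hg
    · simp [Multiset.insert_eq_cons, Multiset.sum_cons]
  have hF2 : IsFact S (g + (g + g)) {g + Finsupp.single i 1, g + Finsupp.single j 1} := by
    constructor
    · intro x hx
      rcases Multiset.mem_cons.mp hx with rfl | hx1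
      · exact hZ.1 _ hyi
      · rw [Multiset.mem_singleton.mp hx1]; exact hZ.1 _ hyj
    · rw [Multiset.insert_eq_cons, Multiset.sum_cons, Multiset.sum_singleton, hgeq]
      abel
  have heq := fact_unique_of_add Huniq hw' hkey hF1 hF2
  have hgmem : g ∈ ({g + Finsupp.single i 1, g + Finsupp.single j 1} : Multiset (↥I →₀ ℕ)) := by
    rw [← heq]
    exact Multiset.mem_cons_self g _
  rcases Multiset.mem_cons.mp hgmem with h | h
  · exact ne_add_single h.symm
  · exact ne_add_single (Multiset.mem_singleton.mp h).symm

lemma erase_ne_zero {Z : Multiset (↥I →₀ ℕ)} {x : ↥I →₀ ℕ} (hx : x ∈ Z)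
    (h : 2 ≤ Multiset.card Z) : Z.erase x ≠ 0 := by
  intro h0
  have h1 := congrArg Multiset.card h0
  rw [Multiset.card_erase_of_mem hx] at h1
  simp only [Multiset.card_zero, Nat.pred_eq_sub_one] at h1
  omega

lemma erase2_ne_zero {Z : Multiset (↥I →₀ ℕ)} {x b : ↥I →₀ ℕ} (hx : x ∈ Z)
    (hb : b ∈ Z.erase x) (h : 3 ≤ Multiset.card Z) : (Z.erase x).erase b ≠ 0 := by
  intro h0
  have h1 := congrArg Multiset.card h0
  rw [Multiset.card_erase_of_mem hb, Multiset.card_erase_of_mem hx] at h1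
  simp only [Multiset.card_zero, Nat.pred_eq_sub_one] at h1
  omega

lemma mem_Z_of_lt (Huniq : ∀ F G, IsFact S s F → IsFact S s G → F = G)
    (hZ : IsFact S s Z) {dmin : ℕ} (hmin : ∀ x ∈ Z, dmin ≤ deg x)
    {w w' : ↥I →₀ ℕ} (hw : w ∈ Sstar S) (hw' : w' ∈ Sstar S) (h : w + w' = s)
    (hdeg : deg w < 2 * dmin) : w ∈ Z := by
  obtain ⟨F, hF⟩ := exists_fact hw
  have hle : F ≤ Z := fact_le_Z Huniq hZ hw' h hF
  have hF0 : F ≠ 0 := by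
    rintro rfl
    exact (mem_sstar.mp hw).2 (by rw [← hF.2]; simp)
  obtain ⟨x, hxF⟩ := Multiset.exists_mem_of_ne_zero hF0
  obtain ⟨F', rfl⟩ : ∃ F', F = x ::ₘ F' := ⟨F.erase x, (Multiset.cons_erase hxF).symm⟩
  rcases eq_or_ne F' 0 with rfl | hF'
  · have : w = x := by rw [← hF.2]; simp
    exact this ▸ Multiset.mem_of_le hle (Multiset.mem_cons_self x 0)
  · exfalso
    obtain ⟨y, hyF⟩ := Multiset.exists_mem_of_ne_zero hF'
    have hxZ : x ∈ Z := Multiset.mem_of_le hle (Multiset.mem_cons_self x F')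
    have hyZ : y ∈ Z := Multiset.mem_of_le hle (Multiset.mem_cons_of_mem hyF)
    have hx2 : dmin ≤ deg x := hmin x hxZ
    have hy2 : dmin ≤ deg y := hmin y hyZ
    have : deg w = deg x + deg (F'.sum) := by rw [← hF.2, Multiset.sum_cons, deg_add]
    have hyle : deg y ≤ deg F'.sum := deg_mono (mem_le_sum hyF)
    omega

lemma exists_pair_le {b : ↥I →₀ ℕ} (h : 2 ≤ deg b) :
    ∃ p q : ↥I, Finsupp.single p 1 + Finsupp.single q 1 ≤ b := by
  have hb0 : b ≠ 0 := by
    intro h0; rw [h0] at h; simp at h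
  obtain ⟨p, hp⟩ := Finsupp.support_nonempty_iff.mpr hb0
  have hp1 : 1 ≤ b p := Nat.one_le_iff_ne_zero.mpr (Finsupp.mem_support_iff.mp hp)
  by_cases h2 : 2 ≤ b p
  · refine ⟨p, p, ?_⟩
    intro a
    rw [Finsupp.add_apply, Finsupp.single_apply]
    rcases eq_or_ne p a with rfl | hpa
    · rw [if_pos rfl]; omega
    · rw [if_neg hpa]; omega
  · by_cases hq : ∀ q ∈ b.support, q = p
    · exfalso
      have hbs : b = Finsupp.single p (b p) := by
        ext a
        rcases eq_or_ne a p with rfl | hap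
        · simp
        · rw [Finsupp.single_apply, if_neg (fun hc : p = a => hap hc.symm)]
          by_contra hba
          exact hap (hq a (Finsupp.mem_support_iff.mpr hba))
      rw [hbs, deg_single] at h
      omega
    · push_neg at hq
      obtain ⟨q, hqs, hqp⟩ := hq
      have hq1 : 1 ≤ b q := Nat.one_le_iff_ne_zero.mpr (Finsupp.mem_support_iff.mp hqs)
      refine ⟨p, q, ?_⟩
      intro a
      rw [Finsupp.add_apply, Finsupp.single_apply, Finsupp.single_apply]
      rcases eq_or_ne p a with rfl | hpa
      · rw [if_pos rfl, if_neg (fun hc : q = p => hqp hc)]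
        omega
      · rcases eq_or_ne q a with rfl | hqa
        · rw [if_neg hpa, if_pos rfl]
          omega
        · rw [if_neg hpa, if_neg hqa]
          omega

lemma pair_sum (x y : ↥I →₀ ℕ) : ({x, y} : Multiset (↥I →₀ ℕ)).sum = x + y := by
  rw [Multiset.insert_eq_cons, Multiset.sum_cons, Multiset.sum_singleton]

lemma pair_fact (hZ : IsFact S s Z) {x y w : ↥I →₀ ℕ}
    (hx : x ∈ Atoms S) (hy : y ∈ Atoms S) (hsum : x + y = w) :
    IsFact S w ({x, y} : Multiset (↥I →₀ ℕ)) := by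
  constructor
  · intro u hu
    rcases Multiset.mem_cons.mp hu with rfl | hu1
    · exact hx
    · rw [Multiset.mem_singleton.mp hu1]; exact hy
  · rw [pair_sum, hsum]

lemma min_deg_two (hS : IsIdealExtension S) (hZ : IsFact S s Z)
    (hcore : ∀ i ∈ s.support, Finsupp.single i (1 : ℕ) ∉ S)
    (Huniq : ∀ F G, IsFact S s F → IsFact S s G → F = G)
    (hcard : 3 ≤ Multiset.card Z)
    {a : ↥I →₀ ℕ} (haZ : a ∈ Z) (hamin : ∀ x ∈ Z, deg a ≤ deg x) : deg a = 2 := by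
  have ha2 : 2 ≤ deg a := (Z_elem hZ hcore haZ).2.2
  by_contra hne
  have hd3 : 3 ≤ deg a := by omega
  obtain ⟨b, hb⟩ := Multiset.exists_mem_of_ne_zero (erase_ne_zero haZ (by omega))
  have hbZ : b ∈ Z := Multiset.mem_of_mem_erase hb
  have hb2 : 2 ≤ deg b := (Z_elem hZ hcore hbZ).2.2
  obtain ⟨p, q, hpq⟩ := exists_pair_le hb2
  have hne2 := erase2_ne_zero haZ hb hcard
  have haS : a ∈ Sstar S := (hZ.1 a haZ).1
  have hyp : a + Finsupp.single p 1 ∈ Z := by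
    obtain ⟨w', hw', hsum⟩ := exists_compl hS hZ haZ hb
      (le_trans (self_le_add_right _ _) hpq) hne2
    exact mem_Z_of_lt Huniq hZ hamin (sstar_up hS haS le_self_add) hw' hsum
      (by rw [deg_add, deg_single]; omega)
  have hyq : a + Finsupp.single q 1 ∈ Z := by
    obtain ⟨w', hw', hsum⟩ := exists_compl hS hZ haZ hb
      (le_trans (self_le_add_left _ _) hpq) hne2
    exact mem_Z_of_lt Huniq hZ hamin (sstar_up hS haS le_self_add) hw' hsum
      (by rw [deg_add, deg_single]; omega)
  have hy3 : a + (Finsupp.single p 1 + Finsupp.single q 1) ∈ Z := by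
    obtain ⟨w', hw', hsum⟩ := exists_compl hS hZ haZ hb hpq hne2
    exact mem_Z_of_lt Huniq hZ hamin (sstar_up hS haS le_self_add) hw' hsum
      (by rw [deg_add, deg_add, deg_single, deg_single]; omega)
  have hy3a : a + (Finsupp.single p 1 + Finsupp.single q 1) ≠ a := by
    intro h
    have := congrArg deg h
    rw [deg_add, deg_add, deg_single, deg_single] at this
    omega
  have hy3e : a + (Finsupp.single p 1 + Finsupp.single q 1) ∈ Z.erase a :=
    (Multiset.mem_erase_of_ne hy3a).mpr hy3
  obtain ⟨w', hw', hsum⟩ := exists_compl hS hZ haZ hy3e le_rfl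
    (erase2_ne_zero haZ hy3e hcard)
  have hF1 : IsFact S (a + (a + (Finsupp.single p 1 + Finsupp.single q 1)))
      {a, a + (Finsupp.single p 1 + Finsupp.single q 1)} :=
    pair_fact hZ (hZ.1 a haZ) (hZ.1 _ hy3) rfl
  have hF2 : IsFact S (a + (a + (Finsupp.single p 1 + Finsupp.single q 1)))
      {a + Finsupp.single p 1, a + Finsupp.single q 1} :=
    pair_fact hZ (hZ.1 _ hyp) (hZ.1 _ hyq) (by abel)
  have heq := fact_unique_of_add Huniq hw' hsum hF1 hF2
  have hamem : a ∈ ({a + Finsupp.single p 1, a + Finsupp.single q 1} :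
      Multiset (↥I →₀ ℕ)) := by
    rw [← heq]
    exact Multiset.mem_cons_self a _
  rcases Multiset.mem_cons.mp hamem with h | h
  · exact ne_add_single h.symm
  · exact ne_add_single (Multiset.mem_singleton.mp h).symm

lemma main_forward (hS : IsIdealExtension S)
    (hcore : ∀ i ∈ s.support, Finsupp.single i (1 : ℕ) ∉ S)
    (hl : 3 ≤ minLen S s)
    (hu : ∃! z : ↥(Atoms S) →₀ ℕ, z ∈ Zset S s) :
    ∃ i : ↥I, Finsupp.single i (1 : ℕ) ∉ S ∧ s = Finsupp.single i 7 ∧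
      Finsupp.single i (2 : ℕ) ∈ S := by
  classical
  have Huniq := uniq_facts hu
  obtain ⟨z0, hz0, -⟩ := hu
  have hZ : IsFact S s (toM S z0) := isFact_toM hz0
  set Z := toM S z0 with hZdef
  have hcard : 3 ≤ Multiset.card Z := by
    have hLmem : Multiset.card Z ∈ Lset S s := fact_mem_nfold hZ
    exact le_trans hl (Nat.sInf_le hLmem)
  have hZ0 : Z ≠ 0 := by
    intro h0
    rw [h0] at hcard
    simp at hcard
  obtain ⟨a, haZ, hamin⟩ := exists_min_deg hZ0
  have hdega : deg a = 2 := min_deg_two hS hZ hcore Huniq hcard haZ hamin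
  have ha0 : a ≠ 0 := (mem_sstar.mp (hZ.1 a haZ).1).2
  obtain ⟨i, hi⟩ := Finsupp.support_nonempty_iff.mpr ha0
  have hai1 : 1 ≤ a i := Nat.one_le_iff_ne_zero.mpr (Finsupp.mem_support_iff.mp hi)
  have hapure : a = Finsupp.single i 2 := by
    by_cases hmix : ∃ j, j ≠ i ∧ 1 ≤ a j
    · obtain ⟨j, hji, haj⟩ := hmix
      exact (mixed_kill hS hZ hcore Huniq hcard haZ
        (fun h : i = j => hji h.symm) hai1 haj hdega).elim
    · push_neg at hmix
      have h1 : a = Finsupp.single i (a i) := by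
        ext b
        rcases eq_or_ne b i with rfl | hbi
        · simp
        · rw [Finsupp.single_apply, if_neg (fun hc : i = b => hbi hc.symm)]
          have := hmix b hbi
          omega
      rw [h1] at hdega ⊢
      rw [deg_single] at hdega
      rw [hdega]
  rw [hapure] at haZ
  have hile : Finsupp.single i (2:ℕ) ≤ s := (Z_elem hZ hcore haZ).2.1
  have hsi2 : 2 ≤ s i := by
    have := (Finsupp.le_def.mp hile) i
    rwa [Finsupp.single_eq_same] at this
  have hsupport_i : i ∈ s.support := Finsupp.mem_support_iff.mpr (by omega)
  have hiS : Finsupp.single i (1 : ℕ) ∉ S := hcore i hsupport_i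
  have h2S : Finsupp.single i (2 : ℕ) ∈ S := (mem_sstar.mp (hZ.1 _ haZ).1).1
  have h32 : Finsupp.single i (3 : ℕ) = Finsupp.single i 2 + Finsupp.single i 1 := by
    rw [← Finsupp.single_add]
  -- find a coordinate in the remainder
  obtain ⟨b, hb⟩ := Multiset.exists_mem_of_ne_zero (erase_ne_zero haZ (by omega))
  have hb0 : b ≠ 0 := (mem_sstar.mp (hZ.1 b (Multiset.mem_of_mem_erase hb)).1).2
  obtain ⟨t0, ht0⟩ := Finsupp.support_nonempty_iff.mpr hb0
  have hbt0 : 1 ≤ b t0 := Nat.one_le_iff_ne_zero.mpr (Finsupp.mem_support_iff.mp ht0)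
  have hy0 : Finsupp.single i 2 + Finsupp.single t0 1 ∈ Z :=
    step_add_single hS hZ hcore Huniq hcard haZ (by rw [deg_single]) ⟨b, hb, hbt0⟩
  have hy0e : Finsupp.single i 2 + Finsupp.single t0 1 ∈ Z.erase (Finsupp.single i 2) :=
    (Multiset.mem_erase_of_ne ne_add_single).mpr hy0
  have hcoordZ : ∀ t : ↥I, 1 ≤ (Z.erase (Finsupp.single i 2)).sum t →
      Finsupp.single i 2 + Finsupp.single t 1 ∈ Z := fun t ht =>
    step_add_single hS hZ hcore Huniq hcard haZ (by rw [deg_single])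
      (exists_coord_mem ht)
  have hsum_i : 1 ≤ (Z.erase (Finsupp.single i 2)).sum i := by
    have h1 := (Finsupp.le_def.mp (mem_le_sum hy0e)) i
    rw [Finsupp.add_apply, Finsupp.single_eq_same] at h1
    omega
  have h3Z : Finsupp.single i 3 ∈ Z := by
    have := hcoordZ i hsum_i
    rwa [← h32] at this
  by_cases hT : ∀ t ∈ s.support, t = i
  · -- ray case
    have hZ23 : ∀ x ∈ Z, x = Finsupp.single i 2 ∨ x = Finsupp.single i 3 := by
      intro x hx
      obtain ⟨hatom, hxle, hdx⟩ := Z_elem hZ hcore hx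
      have hs1 : s = Finsupp.single i (s i) := by
        ext c
        rcases eq_or_ne c i with rfl | hci
        · simp
        · rw [Finsupp.single_apply, if_neg (fun hc : i = c => hci hc.symm)]
          by_contra hsc
          exact hci (hT c (Finsupp.mem_support_iff.mpr hsc))
      have hxs : x = Finsupp.single i (x i) :=
        (eq_single_of_le_single (hs1 ▸ hxle)).1
      rcases atom_pure_23 hS hiS h2S (hxs ▸ hatom) with h | h
      · left; rw [hxs, h]
      · right; rw [hxs, h]
    have h23ne : Finsupp.single i (2:ℕ) ≠ Finsupp.single i 3 := by
      intro h
      have := congrArg (fun f : ↥I →₀ ℕ => f i) h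
      simp at this
    have hZrep := eq_replicate_pair h23ne hZ23
    set p := Z.count (Finsupp.single i 2) with hp
    set q := Z.count (Finsupp.single i 3) with hq
    have hsum : s = Finsupp.single i (2 * p + 3 * q) := by
      rw [← hZ.2, hZrep, Multiset.sum_add, Multiset.sum_replicate, Multiset.sum_replicate,
        Finsupp.smul_single, Finsupp.smul_single, ← Finsupp.single_add]
      congr 1
      simp only [smul_eq_mul]
      ring
    have hcardpq : p + q = Multiset.card Z := by
      rw [hZrep, Multiset.card_add, Multiset.card_replicate, Multiset.card_replicate]
    have halt : ∀ p' q' : ℕ, 2 * p' + 3 * q' = 2 * p + 3 * q → q' = q := by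
      intro p' q' hpq'
      have hF' : IsFact S s (Multiset.replicate p' (Finsupp.single i 2) +
          Multiset.replicate q' (Finsupp.single i 3)) := by
        constructor
        · intro x hx
          rcases Multiset.mem_add.mp hx with h | h
          · rw [Multiset.eq_of_mem_replicate h]; exact atom_two hiS h2S
          · rw [Multiset.eq_of_mem_replicate h]; exact atom_three hS hiS h2S
        · rw [Multiset.sum_add, Multiset.sum_replicate, Multiset.sum_replicate,
            Finsupp.smul_single, Finsupp.smul_single, ← Finsupp.single_add, hsum]
          congr 1
          simp only [smul_eq_mul]
          omega
      have heq := Huniq _ _ hF' hZ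
      have hcq := congrArg (Multiset.count (Finsupp.single i 3)) heq
      rw [Multiset.count_add, Multiset.count_replicate, Multiset.count_replicate,
        if_neg h23ne, if_pos rfl, zero_add] at hcq
      exact hcq
    have hN6 : 6 ≤ 2 * p + 3 * q := by
      have h1 := hcard
      rw [← hcardpq] at h1
      omega
    have hN7 : 2 * p + 3 * q = 7 := by
      by_contra hN
      rcases (by omega : 2 * p + 3 * q = 6 ∨ 8 ≤ 2 * p + 3 * q) with h6 | h8
      · have hq1 := halt 3 0 (by omega)
        have hq2 := halt 0 2 (by omega)
        omega
      · obtain ⟨p0, q0, hque⟩ := rep23 (show 2 ≤ 2 * p + 3 * q - 6 by omega)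
        have hq1 := halt (p0 + 3) q0 (by omega)
        have hq2 := halt p0 (q0 + 2) (by omega)
        omega
    exact ⟨i, hiS, by rw [hsum, hN7], h2S⟩
  · exfalso
    push_neg at hT
    obtain ⟨t, htS, hti⟩ := hT
    have hteS : Finsupp.single t (1 : ℕ) ∉ S := hcore t htS
    have hit : i ≠ t := fun hc => hti hc.symm
    have hsum_t : 1 ≤ (Z.erase (Finsupp.single i 2)).sum t := by
      have hsplit : Finsupp.single i 2 + (Z.erase (Finsupp.single i 2)).sum = s := by
        rw [← Multiset.sum_cons, Multiset.cons_erase haZ, hZ.2]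
      have h1 := congrArg (fun f : ↥I →₀ ℕ => f t) hsplit
      simp only [Finsupp.add_apply] at h1
      have hst : 1 ≤ s t := Nat.one_le_iff_ne_zero.mpr (Finsupp.mem_support_iff.mp htS)
      have hit0 : Finsupp.single i (2:ℕ) t = 0 := by
        rw [Finsupp.single_apply, if_neg hit]
      omega
    have hb2Z : Finsupp.single i 2 + Finsupp.single t 1 ∈ Z := hcoordZ t hsum_t
    have hne1 : Finsupp.single i (3:ℕ) ≠ Finsupp.single i 2 := by
      intro h
      have := congrArg (fun f : ↥I →₀ ℕ => f i) h
      simp at this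
    have hne2 : Finsupp.single i 2 + Finsupp.single t 1 ≠ Finsupp.single i 2 :=
      ne_add_single
    have hne3 : Finsupp.single i 2 + Finsupp.single t 1 ≠ Finsupp.single i 3 := by
      intro h
      have := congrArg (fun f : ↥I →₀ ℕ => f t) h
      simp only [Finsupp.add_apply, Finsupp.single_eq_same, Finsupp.single_apply,
        if_neg hit] at this
      omega
    obtain ⟨R, hR⟩ := cons_three haZ h3Z hb2Z hne1 hne2 hne3
    have hsZ : s = Finsupp.single i 2 + (Finsupp.single i 3 +
        ((Finsupp.single i 2 + Finsupp.single t 1) + R.sum)) := by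
      rw [← hZ.2, hR]
      simp [Multiset.sum_cons]
    by_cases hg : Finsupp.single i 1 + Finsupp.single t 1 ∈ S
    · -- case A : mixed small atom exists
      have hgatom := atom_mix11 hit hiS hteS hg
      have hw' : Finsupp.single i 2 + (Finsupp.single i 2 + R.sum) ∈ Sstar S :=
        sstar_up hS (mem_sstar.mpr ⟨h2S, by simp⟩) le_self_add
      have hkey : (Finsupp.single i 2 + (Finsupp.single i 1 + Finsupp.single t 1)) +
          (Finsupp.single i 2 + (Finsupp.single i 2 + R.sum)) = s := by
        rw [hsZ, h32]
        abel
      have hF : IsFact S (Finsupp.single i 2 + (Finsupp.single i 1 + Finsupp.single t 1))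
          {Finsupp.single i 2, Finsupp.single i 1 + Finsupp.single t 1} :=
        pair_fact hZ (hZ.1 _ haZ) hgatom rfl
      have hle := fact_le_Z Huniq hZ hw' hkey hF
      have hgZ : Finsupp.single i 1 + Finsupp.single t 1 ∈ Z :=
        Multiset.mem_of_le hle
          (Multiset.mem_cons_of_mem (Multiset.mem_singleton_self _))
      have hgi : 1 ≤ (Finsupp.single i 1 + Finsupp.single t 1 : ↥I →₀ ℕ) i := by
        rw [Finsupp.add_apply, Finsupp.single_eq_same]
        omega
      have hgt : 1 ≤ (Finsupp.single i 1 + Finsupp.single t 1 : ↥I →₀ ℕ) t := by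
        rw [Finsupp.add_apply, Finsupp.single_eq_same]
        omega
      exact mixed_kill hS hZ hcore Huniq hcard hgZ hit hgi hgt
        (by rw [deg_add, deg_single, deg_single])
    · -- case B : no mixed small atom
      have hb2S : Finsupp.single i 2 + Finsupp.single t 1 ∈ Sstar S := (hZ.1 _ hb2Z).1
      have hcstar : Finsupp.single i 3 + Finsupp.single t 1 ∈ Sstar S := by
        have h1 : (Finsupp.single i 2 + Finsupp.single t 1) + Finsupp.single i 1 =
            Finsupp.single i 3 + Finsupp.single t 1 := by
          rw [h32]
          abel
        exact h1 ▸ sstar_up hS hb2S le_self_add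
      have hcatom := atom_mix31 hit hiS hteS hg hcstar
      have hw' : Finsupp.single i 2 + R.sum ∈ Sstar S :=
        sstar_up hS (mem_sstar.mpr ⟨h2S, by simp⟩) le_self_add
      have hkey : (Finsupp.single i 2 + (Finsupp.single i 3 + Finsupp.single t 1)) +
          (Finsupp.single i 2 + R.sum) = s := by
        rw [hsZ]
        abel
      have hF1 : IsFact S (Finsupp.single i 2 + (Finsupp.single i 3 + Finsupp.single t 1))
          {Finsupp.single i 2, Finsupp.single i 3 + Finsupp.single t 1} :=
        pair_fact hZ (hZ.1 _ haZ) hcatom rfl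
      have hF2 : IsFact S (Finsupp.single i 2 + (Finsupp.single i 3 + Finsupp.single t 1))
          {Finsupp.single i 3, Finsupp.single i 2 + Finsupp.single t 1} :=
        pair_fact hZ (hZ.1 _ h3Z) (hZ.1 _ hb2Z) (by abel)
      have heq := fact_unique_of_add Huniq hw' hkey hF1 hF2
      have hamem : Finsupp.single i (2:ℕ) ∈
          ({Finsupp.single i 3, Finsupp.single i 2 + Finsupp.single t 1} :
            Multiset (↥I →₀ ℕ)) := by
        rw [← heq]
        exact Multiset.mem_cons_self _ _
      rcases Multiset.mem_cons.mp hamem with h | h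
      · exact hne1 h.symm
      · exact ne_add_single (Multiset.mem_singleton.mp h).symm

lemma main_backward (hS : IsIdealExtension S) {i : ↥I}
    (hiS : Finsupp.single i (1 : ℕ) ∉ S) (h2S : Finsupp.single i (2 : ℕ) ∈ S)
    (hs7 : s = Finsupp.single i 7) :
    ∃! z : ↥(Atoms S) →₀ ℕ, z ∈ Zset S s := by
  classical
  have hA2 := atom_two hiS h2S
  have hA3 := atom_three hS hiS h2S
  have h23ne : Finsupp.single i (2:ℕ) ≠ Finsupp.single i 3 := by
    intro h
    have := congrArg (fun f : ↥I →₀ ℕ => f i) h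
    simp at this
  set F0 : Multiset (↥I →₀ ℕ) :=
    Multiset.replicate 2 (Finsupp.single i 2) + Multiset.replicate 1 (Finsupp.single i 3)
    with hF0
  have hF0fact : IsFact S s F0 := by
    constructor
    · intro x hx
      rcases Multiset.mem_add.mp hx with h | h
      · rw [Multiset.eq_of_mem_replicate h]; exact hA2
      · rw [Multiset.eq_of_mem_replicate h]; exact hA3
    · rw [hF0, Multiset.sum_add, Multiset.sum_replicate, Multiset.sum_replicate,
        Finsupp.smul_single, Finsupp.smul_single, ← Finsupp.single_add, hs7]
      congr 1
  have hfactuniq : ∀ F, IsFact S s F → F = F0 := by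
    intro F hF
    have h23 : ∀ x ∈ F, x = Finsupp.single i 2 ∨ x = Finsupp.single i 3 := by
      intro x hx
      have hatom := hF.1 x hx
      have hxle : x ≤ s := hF.2 ▸ mem_le_sum hx
      have hxs := (eq_single_of_le_single (hs7 ▸ hxle)).1
      rcases atom_pure_23 hS hiS h2S (hxs ▸ hatom) with h | h
      · left; rw [hxs, h]
      · right; rw [hxs, h]
    have hrep := eq_replicate_pair h23ne h23
    have h1 := hF.2
    rw [hrep, Multiset.sum_add, Multiset.sum_replicate, Multiset.sum_replicate,
      Finsupp.smul_single, Finsupp.smul_single, ← Finsupp.single_add, hs7] at h1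
    have h2 := congrArg (fun f : ↥I →₀ ℕ => f i) h1
    simp only [Finsupp.single_eq_same, smul_eq_mul] at h2
    have hp2 : F.count (Finsupp.single i 2) = 2 := by omega
    have hq1 : F.count (Finsupp.single i 3) = 1 := by omega
    rw [hrep, hp2, hq1, hF0]
  obtain ⟨z0, hz0M⟩ := toM_surj hF0fact.1
  refine ⟨z0, ?_, ?_⟩
  · show factSum S z0 = s
    rw [← toM_sum, hz0M, hF0fact.2]
  · intro z hz
    have hzf : IsFact S s (toM S z) := isFact_toM hz
    have h3 := hfactuniq _ hzf
    apply toM_inj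
    rw [h3, hz0M]

end St12
theorem statement12 (I : Set ℕ) (hI : I.Nonempty) (S : AddSubmonoid (↥I →₀ ℕ))
    (hS : IsIdealExtension S) (s : ↥I →₀ ℕ) (hs : s ∈ S)
    (hcore : ∀ i ∈ s.support, Finsupp.single i (1 : ℕ) ∉ S)
    (hl : 3 ≤ minLen S s) :
    (∃! z : ↥(Atoms S) →₀ ℕ, z ∈ Zset S s) ↔
      ∃ i : ↥I, Finsupp.single i (1 : ℕ) ∉ S ∧
        s = Finsupp.single i 7 ∧
        Finsupp.single i (2 : ℕ) ∈ S ∧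
        ∀ j ∈ (Finsupp.single i (2 : ℕ)).support,
          Finsupp.single j (1 : ℕ) ∉ S := by
  constructor
  · intro hu
    obtain ⟨i, h1, h2, h3⟩ := St12.main_forward hS hcore hl hu
    refine ⟨i, h1, h2, h3, ?_⟩
    intro j hj
    have hji : j = i := by
      rw [Finsupp.support_single_ne_zero i (by norm_num : (2:ℕ) ≠ 0)] at hj
      exact Finset.mem_singleton.mp hj
    rw [hji]
    exact h1
  · rintro ⟨i, h1, h2, h3, -⟩
    exact St12.main_backward hS h1 h3 h2
end
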